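/- arXiv:2112.04097 — 5 statements merged into one kernel-verified Lean document; each statement's English description precedes it below -/
import Mathlib

section
/- For any finite digraph D, the complementarity spectrum of its adjacency matrix equals the set of spectral radii of the induced strongly connected subdigraphs of D. -/
open Matrix
open scoped Classical

noncomputable section

/-- Adjacency matrix of a digraph given by an arc relation `E`. -/
def adjMat {V : Type*} (E : V → V → Prop) : Matrix V V ℝ :=
  Matrix.of fun i j => if E i j then (1 : ℝ) else 0

/-- Spectral radius of a real square matrix: the largest modulus of a (complex) eigenvalue. -/
def matSpecRad {n : Type*} [Fintype n] (A : Matrix n n ℝ) : ℝ :=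
  sSup {r : ℝ | ∃ μ ∈ spectrum ℂ (A.map (fun x => (x : ℂ))), r = ‖μ‖}

/-- Spectral radius of a digraph. -/
def rho {V : Type*} [Fintype V] (E : V → V → Prop) : ℝ :=
  matSpecRad (adjMat E)

/-- The complementarity spectrum of a real square matrix. -/
def compSpec {n : Type*} [Fintype n] (A : Matrix n n ℝ) : Set ℝ :=
  {lam | ∃ x : n → ℝ, x ≠ 0 ∧ 0 ≤ x ∧ 0 ≤ A.mulVec x - lam • x ∧
    x ⬝ᵥ (A.mulVec x - lam • x) = 0}

/-- Reachability by directed paths. -/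
def Reach {V : Type*} (E : V → V → Prop) : V → V → Prop :=
  Relation.ReflTransGen E

/-- A digraph is strongly connected if every vertex reaches every other one. -/
def StronglyConnected {V : Type*} (E : V → V → Prop) : Prop :=
  ∀ u v, Reach E u v

/-- Induced subdigraph on a vertex subset `S`. -/
def induceRel {V : Type*} (E : V → V → Prop) (S : Set V) : S → S → Prop :=
  fun a b => E a.1 b.1

/-- Spectral radius of the induced subdigraph on `S`. -/
def specRadOn {V : Type*} [Fintype V] (E : V → V → Prop) (S : Set V) : ℝ :=
  @rho S (Set.Finite.fintype S.toFinite) (induceRel E S)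

/-- Complementarity spectrum of the induced subdigraph on `S`. -/
def compSpecOn {V : Type*} [Fintype V] (E : V → V → Prop) (S : Set V) : Set ℝ :=
  @compSpec S (Set.Finite.fintype S.toFinite) (adjMat (induceRel E S))

/-- Isomorphism of digraphs. -/
def IsoDigraph {V W : Type*} (E : V → V → Prop) (F : W → W → Prop) : Prop :=
  ∃ e : V ≃ W, ∀ a b, E a b ↔ F (e a) (e b)

/-- The directed cycle on `n` vertices. -/
def cycleRel (n : ℕ) : ZMod n → ZMod n → Prop := fun i j => j = i + 1

/-- A digraph is a directed cycle if it is isomorphic to some `C⃗_n`, `n ≥ 2`. -/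
def IsCycleDigraph {V : Type*} (E : V → V → Prop) : Prop :=
  ∃ n : ℕ, 2 ≤ n ∧ IsoDigraph E (cycleRel n)

/-- A digraph is acyclic if it has no directed cycle. -/
def Acyclic {V : Type*} (E : V → V → Prop) : Prop :=
  ∀ v, ¬ Relation.TransGen E v v

/-- Strongly connected component of the vertex `v`. -/
def component {V : Type*} (E : V → V → Prop) (v : V) : Set V :=
  {u | Reach E u v ∧ Reach E v u}

/-- `D` has an `∞(r,s)`-subdigraph: two directed cycles of lengths `r` and `s`
sharing exactly one vertex, all of whose arcs are arcs of `D`. -/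
def InftySub {V : Type*} (E : V → V → Prop) (r s : ℕ) : Prop :=
  ∃ (f : ZMod r → V) (g : ZMod s → V),
    Function.Injective f ∧ Function.Injective g ∧ f 0 = g 0 ∧
    Set.range f ∩ Set.range g = {f 0} ∧
    (∀ i, E (f i) (f (i + 1))) ∧ (∀ j, E (g j) (g (j + 1)))

/-- `D` has a `θ(a,b,c)`-subdigraph: three internally disjoint directed paths,
two from `v` to `w` (of lengths `a+1` and `b+1`) and one from `w` to `v`
(of length `c+1`), all of whose arcs are arcs of `D`. -/
def ThetaSub {V : Type*} (E : V → V → Prop) (a b c : ℕ) : Prop :=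
  ∃ (P : Fin (a + 2) → V) (Q : Fin (b + 2) → V) (R : Fin (c + 2) → V),
    Function.Injective P ∧ Function.Injective Q ∧ Function.Injective R ∧
    P 0 = Q 0 ∧ Q 0 = R (Fin.last (c + 1)) ∧
    P (Fin.last (a + 1)) = Q (Fin.last (b + 1)) ∧ Q (Fin.last (b + 1)) = R 0 ∧
    (∀ i j, P i = Q j → (i = 0 ∧ j = 0) ∨ (i = Fin.last (a + 1) ∧ j = Fin.last (b + 1))) ∧
    (∀ i j, P i = R j → (i = 0 ∧ j = Fin.last (c + 1)) ∨ (i = Fin.last (a + 1) ∧ j = 0)) ∧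
    (∀ i j, Q i = R j → (i = 0 ∧ j = Fin.last (c + 1)) ∨ (i = Fin.last (b + 1) ∧ j = 0)) ∧
    (∀ i : Fin (a + 1), E (P i.castSucc) (P i.succ)) ∧
    (∀ i : Fin (b + 1), E (Q i.castSucc) (Q i.succ)) ∧
    (∀ i : Fin (c + 1), E (R i.castSucc) (R i.succ))

/-- `D` is (isomorphic to) the `∞(r,s)` digraph: the coalescence of the directed
cycles `C⃗_r` and `C⃗_s` at one vertex, with no further vertices or arcs. -/
def IsInftyDigraph {V : Type*} (E : V → V → Prop) (r s : ℕ) : Prop :=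
  ∃ (f : ZMod r → V) (g : ZMod s → V),
    Function.Injective f ∧ Function.Injective g ∧ f 0 = g 0 ∧
    Set.range f ∩ Set.range g = {f 0} ∧
    Set.range f ∪ Set.range g = Set.univ ∧
    ∀ u v, E u v ↔ ((∃ i, u = f i ∧ v = f (i + 1)) ∨ (∃ j, u = g j ∧ v = g (j + 1)))

/-- `D` is (isomorphic to) the `θ(a,b,c)` digraph: three internally disjoint
directed paths, two from `v` to `w` and one from `w` to `v`, with no further
vertices or arcs. -/
def IsThetaDigraph {V : Type*} (E : V → V → Prop) (a b c : ℕ) : Prop :=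
  ∃ (P : Fin (a + 2) → V) (Q : Fin (b + 2) → V) (R : Fin (c + 2) → V),
    Function.Injective P ∧ Function.Injective Q ∧ Function.Injective R ∧
    P 0 = Q 0 ∧ Q 0 = R (Fin.last (c + 1)) ∧
    P (Fin.last (a + 1)) = Q (Fin.last (b + 1)) ∧ Q (Fin.last (b + 1)) = R 0 ∧
    (∀ i j, P i = Q j → (i = 0 ∧ j = 0) ∨ (i = Fin.last (a + 1) ∧ j = Fin.last (b + 1))) ∧
    (∀ i j, P i = R j → (i = 0 ∧ j = Fin.last (c + 1)) ∨ (i = Fin.last (a + 1) ∧ j = 0)) ∧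
    (∀ i j, Q i = R j → (i = 0 ∧ j = Fin.last (c + 1)) ∨ (i = Fin.last (b + 1) ∧ j = 0)) ∧
    Set.range P ∪ Set.range Q ∪ Set.range R = Set.univ ∧
    (∀ u v, E u v ↔
      ((∃ i : Fin (a + 1), u = P i.castSucc ∧ v = P i.succ) ∨
       (∃ i : Fin (b + 1), u = Q i.castSucc ∧ v = Q i.succ) ∨
       (∃ i : Fin (c + 1), u = R i.castSucc ∧ v = R i.succ)))


section Auxiliary

/-- Sum over a subtype equals sum over ambient type when `f` vanishes off `S`. -/
lemma sum_coe {V : Type*} [Fintype V] (S : Set V) [Fintype S] (f : V → ℝ)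
    (hf : ∀ v, v ∉ S → f v = 0) : ∑ v : S, f v.1 = ∑ v, f v := by
  classical
  rw [Finset.sum_subtype S.toFinset (by simp) f |>.symm]
  exact Finset.sum_subset (Finset.subset_univ _) (by simpa using hf)

lemma mem_spectrum_iff_eigen {n : Type*} [Fintype n] [DecidableEq n] (M : Matrix n n ℂ) (μ : ℂ) :
    μ ∈ spectrum ℂ M ↔ ∃ v : n → ℂ, v ≠ 0 ∧ M.mulVec v = μ • v := by
  rw [spectrum.mem_iff]
  constructor
  · intro h
    have hdet : (algebraMap ℂ (Matrix n n ℂ) μ - M).det = 0 := by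
      by_contra hd
      exact h ((Matrix.isUnit_iff_isUnit_det _).mpr (isUnit_iff_ne_zero.mpr hd))
    obtain ⟨v, hv, hmv⟩ := (Matrix.exists_mulVec_eq_zero_iff).mpr hdet
    refine ⟨v, hv, ?_⟩
    rw [Matrix.sub_mulVec, sub_eq_zero, Algebra.algebraMap_eq_smul_one,
      Matrix.smul_mulVec, Matrix.one_mulVec] at hmv
    exact hmv.symm
  · rintro ⟨v, hv, hmv⟩ hU
    have hinj := Matrix.mulVec_injective_iff_isUnit.mpr hU
    apply hv
    have : (algebraMap ℂ (Matrix n n ℂ) μ - M).mulVec v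
        = (algebraMap ℂ (Matrix n n ℂ) μ - M).mulVec 0 := by
      rw [Matrix.mulVec_zero, Matrix.sub_mulVec, Algebra.algebraMap_eq_smul_one,
        Matrix.smul_mulVec, Matrix.one_mulVec, hmv, sub_self]
    exact hinj this

lemma adjMat_nonneg {V : Type*} (E : V → V → Prop) : ∀ i j, 0 ≤ adjMat E i j := fun i j => by
  simp only [adjMat, Matrix.of_apply]; split <;> norm_num

lemma matSpecRad_instirrel {n : Type*} (I1 I2 : Fintype n) (A : Matrix n n ℝ) :
    @matSpecRad n I1 A = @matSpecRad n I2 A := by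
  rw [Subsingleton.elim I1 I2]

lemma specRadOn_eq {V : Type*} [Fintype V] (E : V → V → Prop) (S : Set V) [inst : Fintype S] :
    specRadOn E S = @matSpecRad S inst (adjMat (induceRel E S)) := by
  unfold specRadOn rho
  exact matSpecRad_instirrel _ _ _

lemma matSpecRad_eq_of_pos_eigen {n : Type*} [Fintype n] [Nonempty n] (B : Matrix n n ℝ)
    (hB : ∀ i j, 0 ≤ B i j) (x : n → ℝ) (hx : ∀ i, 0 < x i) (lam : ℝ)
    (heig : B.mulVec x = lam • x) : matSpecRad B = lam := by
  classical
  have heig' : ∀ i, ∑ j, B i j * x j = lam * x i := by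
    intro i
    have := congrFun heig i
    simpa [Matrix.mulVec, dotProduct] using this
  obtain ⟨i₀⟩ := ‹Nonempty n›
  have hlam0 : 0 ≤ lam := by
    have h1 : 0 ≤ ∑ j, B i₀ j * x j :=
      Finset.sum_nonneg fun j _ => mul_nonneg (hB _ _) (hx j).le
    rw [heig' i₀] at h1
    exact le_of_mul_le_mul_right (by linarith : 0 * x i₀ ≤ lam * x i₀) (hx i₀)
  -- lam ∈ spectrum
  have hmem : (lam : ℂ) ∈ spectrum ℂ (B.map (fun x => (x : ℂ))) := by
    rw [mem_spectrum_iff_eigen]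
    refine ⟨fun i => (x i : ℂ), ?_, ?_⟩
    · intro h
      have := congrFun h i₀
      simp only [Pi.zero_apply, Complex.ofReal_eq_zero] at this
      exact (hx i₀).ne' this
    · funext i
      simp only [Matrix.mulVec, dotProduct, Matrix.map_apply, Pi.smul_apply, smul_eq_mul]
      have h := congrArg (fun r : ℝ => (r : ℂ)) (heig' i)
      push_cast at h
      simpa using h
  -- bound
  have hbd : ∀ μ ∈ spectrum ℂ (B.map (fun x => (x : ℂ))), ‖μ‖ ≤ lam := by
    intro μ hμ
    rw [mem_spectrum_iff_eigen] at hμ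
    obtain ⟨v, hv, hmv⟩ := hμ
    obtain ⟨i₁, -, hi₁⟩ := Finset.exists_max_image Finset.univ
      (fun i => ‖v i‖ / x i) ⟨i₀, Finset.mem_univ _⟩
    set t := ‖v i₁‖ / x i₁ with ht
    have htpos : 0 < t := by
      obtain ⟨j, hj⟩ := Function.ne_iff.mp hv
      have : 0 < ‖v j‖ / x j :=
        div_pos (by simpa using hj) (hx j)
      exact lt_of_lt_of_le this (hi₁ j (Finset.mem_univ _))
    have hvle : ∀ j, ‖v j‖ ≤ t * x j := by
      intro j
      have := hi₁ j (Finset.mem_univ _)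
      rw [div_le_iff₀ (hx j)] at this
      linarith [this]
    have hveq : ‖v i₁‖ = t * x i₁ := by
      rw [ht, div_mul_cancel₀]
      exact (hx i₁).ne'
    have h2 : (B.map (fun x => (x : ℂ))).mulVec v i₁ = μ * v i₁ := by
      rw [hmv]; rfl
    have h1 : ‖μ * v i₁‖ ≤ ∑ j, B i₁ j * ‖v j‖ := by
      calc ‖μ * v i₁‖ = ‖∑ j, (B i₁ j : ℂ) * v j‖ := by
            rw [← h2]; rfl
        _ ≤ ∑ j, ‖(B i₁ j : ℂ) * v j‖ := norm_sum_le _ _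
        _ = ∑ j, B i₁ j * ‖v j‖ := by
            refine Finset.sum_congr rfl fun j _ => ?_
            rw [norm_mul, Complex.norm_of_nonneg (hB _ _)]
    have h3 : ∑ j, B i₁ j * ‖v j‖ ≤ ∑ j, B i₁ j * (t * x j) :=
      Finset.sum_le_sum fun j _ => mul_le_mul_of_nonneg_left (hvle j) (hB _ _)
    have h4 : ∑ j, B i₁ j * (t * x j) = t * (lam * x i₁) := by
      rw [← heig' i₁, Finset.mul_sum]
      exact Finset.sum_congr rfl fun j _ => by ring
    have hstep : ‖μ‖ * (t * x i₁) ≤ lam * (t * x i₁) := by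
      calc ‖μ‖ * (t * x i₁) = ‖μ * v i₁‖ := by
            rw [norm_mul, hveq]
        _ ≤ t * (lam * x i₁) := le_trans h1 (le_trans h3 (le_of_eq h4))
        _ = lam * (t * x i₁) := by ring
    exact le_of_mul_le_mul_right hstep (by exact mul_pos htpos (hx i₁))
  -- conclude
  unfold matSpecRad
  apply le_antisymm
  · apply Real.sSup_le
    · rintro r ⟨μ, hμ, rfl⟩
      exact hbd μ hμ
    · exact hlam0
  · apply le_csSup
    · exact ⟨lam, by rintro r ⟨μ, hμ, rfl⟩; exact hbd μ hμ⟩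
    · exact ⟨(lam : ℂ), hmem, by rw [Complex.norm_of_nonneg hlam0]⟩


section Perron
variable {n : Type*} [Fintype n] [Nonempty n] (R : n → n → Prop)

/-- spreading of positivity along reverse reachability for the iteration v ↦ v + Bv -/
lemma perron_aux_spread (z : n → ℝ) (hz : ∀ i, 0 ≤ z i)
    {j : n} (hzj : 0 < z j) :
    ∀ i, Relation.ReflTransGen R i j →
      ∃ k, 0 < (fun v => v + (adjMat R).mulVec v)^[k] z i := by
  classical
  set B := adjMat R with hBdef
  have hB : ∀ i j, 0 ≤ B i j := fun i j => by
    simp only [hBdef, adjMat, Matrix.of_apply]; split <;> norm_num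
  set F : (n → ℝ) → (n → ℝ) := fun v => v + B.mulVec v with hF
  have hFnn : ∀ v : n → ℝ, (∀ i, 0 ≤ v i) → ∀ i, 0 ≤ F v i := by
    intro v hv i
    have : 0 ≤ B.mulVec v i :=
      Finset.sum_nonneg fun j _ => mul_nonneg (hB _ _) (hv j)
    simpa [hF] using add_nonneg (hv i) this
  have hiter_nn : ∀ k i, 0 ≤ F^[k] z i := by
    intro k
    induction k with
    | zero => simpa using hz
    | succ k ih => rw [Function.iterate_succ_apply']; exact hFnn _ ih
  intro i hreach
  induction hreach using Relation.ReflTransGen.head_induction_on with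
  | refl => exact ⟨0, by simpa using hzj⟩
  | @head a c hac hcb ih =>
    obtain ⟨k, hk⟩ := ih
    refine ⟨k + 1, ?_⟩
    rw [Function.iterate_succ_apply']
    have hsum : B a c * F^[k] z c ≤ B.mulVec (F^[k] z) a :=
      Finset.single_le_sum (f := fun j => B a j * F^[k] z j)
        (fun j _ => mul_nonneg (hB _ _) (hiter_nn k j)) (Finset.mem_univ c)
    have hBac : B a c = 1 := by simp [hBdef, adjMat, hac]
    have : 0 < B.mulVec (F^[k] z) a := lt_of_lt_of_le (by rw [hBac]; simpa using hk) hsum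
    have := add_pos_of_nonneg_of_pos (hiter_nn k a) this
    simpa [hF] using this

lemma perron (hSC : ∀ u v, Relation.ReflTransGen R u v) :
    ∃ x : n → ℝ, (∀ i, 0 < x i) ∧
      (adjMat R).mulVec x = (matSpecRad (adjMat R)) • x := by
  classical
  set B := adjMat R with hBdef
  have hB : ∀ i j, 0 ≤ B i j := fun i j => by
    simp only [hBdef, adjMat, Matrix.of_apply]; split <;> norm_num
  have hB1 : ∀ i j, B i j ≤ 1 := fun i j => by
    simp only [hBdef, adjMat, Matrix.of_apply]; split <;> norm_num
  set N : ℝ := (Fintype.card n : ℝ) with hN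
  have hNpos : 0 < N := by
    simp [hN]; exact Fintype.card_pos
  -- the feasible set
  set T : Set (ℝ × (n → ℝ)) := {p | 0 ≤ p.1 ∧ (∀ i, 0 ≤ p.2 i) ∧ (∑ i, p.2 i) = 1 ∧
      ∀ i, p.1 * p.2 i ≤ B.mulVec p.2 i} with hT
  have hTne : T.Nonempty := by
    refine ⟨(0, fun _ => 1 / N), le_refl 0, fun i => by positivity, ?_, ?_⟩
    · simp only [Finset.sum_const, Finset.card_univ, nsmul_eq_mul, mul_one_div, ← hN]
      exact div_self hNpos.ne'
    · intro i
      simp only [zero_mul]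
      exact Finset.sum_nonneg fun j _ => mul_nonneg (hB _ _) (by positivity)
  -- boundedness
  have hTsub : T ⊆ Set.Icc (0:ℝ) (N * N) ×ˢ Set.univ.pi fun _ => Set.Icc (0:ℝ) 1 := by
    rintro ⟨lam, x⟩ ⟨h0, hxnn, hsum, hle⟩
    have hxle1 : ∀ i, x i ≤ 1 := by
      intro i
      calc x i ≤ ∑ j, x j := Finset.single_le_sum (fun j _ => hxnn j) (Finset.mem_univ i)
        _ = 1 := hsum
    constructor
    · -- lam ≤ N * N
      refine ⟨h0, ?_⟩
      -- pick i with x i ≥ 1/N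
      have hex : ∃ i, 1 / N ≤ x i := by
        by_contra hcon
        push_neg at hcon
        have : (∑ i, x i) < ∑ i : n, 1 / N :=
          Finset.sum_lt_sum_of_nonempty Finset.univ_nonempty fun i _ => hcon i
        have hcard : ∑ _i : n, (1/N : ℝ) = 1 := by
          rw [Finset.sum_const, Finset.card_univ, nsmul_eq_mul, mul_one_div, ← hN,
            div_self hNpos.ne']
        rw [hsum, hcard] at this
        exact lt_irrefl _ this
      obtain ⟨i, hi⟩ := hex
      have h1 : lam * (1/N) ≤ lam * x i := by
        apply mul_le_mul_of_nonneg_left hi h0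
      have h2 : B.mulVec x i ≤ N := by
        calc B.mulVec x i = ∑ j, B i j * x j := rfl
          _ ≤ ∑ _j : n, (1:ℝ) := Finset.sum_le_sum fun j _ =>
              mul_le_one₀ (hB1 _ _) (hxnn j) (hxle1 j)
          _ = N := by simp [hN]
      have := le_trans h1 (le_trans (hle i) h2)
      rw [mul_one_div, div_le_iff₀ hNpos] at this
      exact this
    · intro i _
      exact ⟨hxnn i, hxle1 i⟩
  have hTclosed : IsClosed T := by
    have hc1 : Continuous fun p : ℝ × (n → ℝ) => p.1 := continuous_fst
    have hc2 : ∀ i, Continuous fun p : ℝ × (n → ℝ) => p.2 i :=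
      fun i => (continuous_apply i).comp continuous_snd
    have hc3 : Continuous fun p : ℝ × (n → ℝ) => ∑ i, p.2 i :=
      continuous_finset_sum _ fun i _ => hc2 i
    have hc4 : ∀ i, Continuous fun p : ℝ × (n → ℝ) => B.mulVec p.2 i := by
      intro i
      have : (fun p : ℝ × (n → ℝ) => B.mulVec p.2 i)
          = fun p : ℝ × (n → ℝ) => ∑ j, B i j * p.2 j := rfl
      rw [this]
      exact continuous_finset_sum _ fun j _ => (continuous_const.mul (hc2 j))
    have : T = {p : ℝ × (n → ℝ) | 0 ≤ p.1} ∩ ((⋂ i, {p | 0 ≤ p.2 i}) ∩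
        ({p | ∑ i, p.2 i = 1} ∩ ⋂ i, {p | p.1 * p.2 i ≤ B.mulVec p.2 i})) := by
      ext p
      simp only [hT, Set.mem_setOf_eq, Set.mem_inter_iff, Set.mem_iInter]
      try tauto
    rw [this]
    refine IsClosed.inter (isClosed_le continuous_const hc1)
      (IsClosed.inter ?_ (IsClosed.inter ?_ ?_))
    · exact isClosed_iInter fun i => isClosed_le continuous_const (hc2 i)
    · exact isClosed_eq hc3 continuous_const
    · exact isClosed_iInter fun i => isClosed_le (hc1.mul (hc2 i)) (hc4 i)
  have hTcomp : IsCompact T := by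
    have hK : IsCompact (Set.Icc (0:ℝ) (N * N) ×ˢ Set.univ.pi fun _ : n => Set.Icc (0:ℝ) 1) :=
      (isCompact_Icc).prod (isCompact_univ_pi fun _ => isCompact_Icc)
    exact hK.of_isClosed_subset hTclosed hTsub
  obtain ⟨p, hpT, hmax⟩ := hTcomp.exists_isMaxOn hTne continuous_fst.continuousOn
  obtain ⟨r, x⟩ := p
  obtain ⟨hr0, hxnn, hsum, hle⟩ := hpT
  have hmax' : ∀ q ∈ T, q.1 ≤ r := fun q hq => hmax hq
  -- x ≠ 0
  have hxne : ∃ j, 0 < x j := by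
    by_contra hcon
    push_neg at hcon
    have : ∑ i, x i = 0 := le_antisymm (Finset.sum_nonpos fun i _ => hcon i)
      (Finset.sum_nonneg fun i _ => hxnn i)
    rw [hsum] at this; norm_num at this
  -- the eigen equation
  have heig : B.mulVec x = r • x := by
    by_contra hne
    set z : n → ℝ := B.mulVec x - r • x with hz
    have hznn : ∀ i, 0 ≤ z i := fun i => by
      have := hle i; simp [hz]; linarith
    have hzne : ∃ j, 0 < z j := by
      by_contra hcon
      push_neg at hcon
      apply hne
      funext i
      have h1 : z i = 0 := le_antisymm (hcon i) (hznn i)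
      have := h1
      simp only [hz, Pi.sub_apply, Pi.smul_apply, smul_eq_mul, sub_eq_zero] at this
      simpa using this
    obtain ⟨j₀, hj₀⟩ := hzne
    obtain ⟨j₁, hj₁⟩ := hxne
    set F : (n → ℝ) → (n → ℝ) := fun v => v + B.mulVec v with hF
    -- monotonicity of the iteration in k
    have hFnn : ∀ v : n → ℝ, (∀ i, 0 ≤ v i) → ∀ i, 0 ≤ F v i := by
      intro v hv i
      have : 0 ≤ B.mulVec v i :=
        Finset.sum_nonneg fun j _ => mul_nonneg (hB _ _) (hv j)
      simpa [hF] using add_nonneg (hv i) this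
    have hiternn : ∀ (w : n → ℝ), (∀ i, 0 ≤ w i) → ∀ k i, 0 ≤ F^[k] w i := by
      intro w hw k
      induction k with
      | zero => simpa using hw
      | succ k ih => rw [Function.iterate_succ_apply']; exact hFnn _ ih
    have hmono : ∀ (w : n → ℝ), (∀ i, 0 ≤ w i) → ∀ k i, F^[k] w i ≤ F^[k+1] w i := by
      intro w hw k i
      rw [Function.iterate_succ_apply']
      have : 0 ≤ B.mulVec (F^[k] w) i :=
        Finset.sum_nonneg fun j _ => mul_nonneg (hB _ _) (hiternn w hw k j)
      simp only [hF, Pi.add_apply]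
      linarith
    have hmono' : ∀ (w : n → ℝ), (∀ i, 0 ≤ w i) → ∀ k l, k ≤ l → ∀ i, F^[k] w i ≤ F^[l] w i := by
      intro w hw k l hkl i
      induction hkl with
      | refl => exact le_refl _
      | step h ih => exact le_trans ih (hmono w hw _ i)
    -- eventual positivity for z and x
    have hzpos : ∀ i, ∃ k, 0 < F^[k] z i := fun i =>
      perron_aux_spread R z hznn hj₀ i (hSC i j₀)
    have hxpos : ∀ i, ∃ k, 0 < F^[k] x i := fun i =>
      perron_aux_spread R x hxnn hj₁ i (hSC i j₁)
    choose kz hkz using hzpos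
    choose kx hkx using hxpos
    set K : ℕ := (Finset.univ.sup kz) ⊔ (Finset.univ.sup kx) with hK
    have hzK : ∀ i, 0 < F^[K] z i := fun i =>
      lt_of_lt_of_le (hkz i) (hmono' z hznn (kz i) K
        (le_trans (Finset.le_sup (Finset.mem_univ i)) le_sup_left) i)
    have hxK : ∀ i, 0 < F^[K] x i := fun i =>
      lt_of_lt_of_le (hkx i) (hmono' x hxnn (kx i) K
        (le_trans (Finset.le_sup (Finset.mem_univ i)) le_sup_right) i)
    -- the recursion identity : B (F^[k] x) - r • (F^[k] x) = F^[k] z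
    have hrec : ∀ k, B.mulVec (F^[k] x) - r • (F^[k] x) = F^[k] z := by
      intro k
      induction k with
      | zero => simp [hz]
      | succ k ih =>
        rw [Function.iterate_succ_apply', Function.iterate_succ_apply', ← ih]
        simp only [hF]
        rw [Matrix.mulVec_add, smul_add, Matrix.mulVec_sub, Matrix.mulVec_smul]
        module
    set w : n → ℝ := F^[K] x with hw
    set u : n → ℝ := F^[K] z with hu
    have hwB : B.mulVec w - r • w = u := hrec K
    -- epsilon
    set ε : ℝ := Finset.univ.inf' Finset.univ_nonempty (fun i => u i / w i) with hε
    have hεpos : 0 < ε := by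
      rw [hε, Finset.lt_inf'_iff]
      exact fun i _ => div_pos (hzK i) (hxK i)
    have hεle : ∀ i, ε * w i ≤ u i := by
      intro i
      have h1 : ε ≤ u i / w i := Finset.inf'_le _ (Finset.mem_univ i)
      rw [le_div_iff₀ (hxK i)] at h1
      linarith
    -- contradiction with maximality
    set s : ℝ := ∑ i, w i with hs
    have hspos : 0 < s := Finset.sum_pos (fun i _ => hxK i) Finset.univ_nonempty
    have hqT : ((r + ε, s⁻¹ • w) : ℝ × (n → ℝ)) ∈ T := by
      refine ⟨by positivity, fun i => ?_, ?_, ?_⟩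
      · have h0 := (hxK i).le
        have h1 : (0:ℝ) ≤ s⁻¹ := inv_nonneg.mpr hspos.le
        simpa using mul_nonneg h1 h0
      · simp only [Pi.smul_apply, smul_eq_mul, ← Finset.mul_sum, ← hs]
        exact inv_mul_cancel₀ hspos.ne'
      · intro i
        have hui := congrFun hwB i
        simp only [Pi.sub_apply, Pi.smul_apply, smul_eq_mul] at hui
        have h1 : (r + ε) * w i ≤ B.mulVec w i := by
          have := hεle i
          linarith
        show (r + ε) * (s⁻¹ • w) i ≤ B.mulVec (s⁻¹ • w) i
        rw [Matrix.mulVec_smul]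
        simp only [Pi.smul_apply, smul_eq_mul]
        calc (r + ε) * (s⁻¹ * w i) = s⁻¹ * ((r + ε) * w i) := by ring
          _ ≤ s⁻¹ * (B.mulVec w i) := mul_le_mul_of_nonneg_left h1 (inv_nonneg.mpr hspos.le)
    have hcontra := hmax' _ hqT
    simp only at hcontra
    linarith
  have hxposall : ∀ i, 0 < x i := by
    by_contra hcon
    push_neg at hcon
    obtain ⟨i, hi⟩ := hcon
    have hxi : x i = 0 := le_antisymm hi (hxnn i)
    obtain ⟨j, hj⟩ := hxne
    -- zero propagates along reachability
    have hprop : ∀ a b, Relation.ReflTransGen R a b → x a = 0 → x b = 0 := by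
      intro a b hab
      induction hab using Relation.ReflTransGen.head_induction_on with
      | refl => exact fun h => h
      | @head a' c hac hcb ih =>
        intro ha
        apply ih
        have h1 : B.mulVec x a' = r * x a' := congrFun heig a'
        rw [ha, mul_zero] at h1
        have h2 : ∀ j', B a' j' * x j' = 0 := by
          have := (Finset.sum_eq_zero_iff_of_nonneg
            (fun j' (_ : j' ∈ Finset.univ) => mul_nonneg (hB a' j') (hxnn j'))).mp h1
          exact fun j' => this j' (Finset.mem_univ j')
        have hBac : B a' c = 1 := by simp [hBdef, adjMat, hac]
        have := h2 c
        rw [hBac, one_mul] at this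
        exact this
    exact absurd (hprop i j (hSC i j) hxi) hj.ne'
  refine ⟨x, hxposall, ?_⟩
  rw [matSpecRad_eq_of_pos_eigen B hB x hxposall r heig]
  exact heig
end Perron

end Auxiliary

/-- the complementarity spectrum of a digraph is the set of spectral
radii of its induced strongly connected subdigraphs. -/
theorem stmt3 {V : Type*} [Fintype V] (E : V → V → Prop) :
    compSpec (adjMat E) =
      {r : ℝ | ∃ S : Set V, S.Nonempty ∧ StronglyConnected (induceRel E S) ∧
        r = specRadOn E S} := by
  classical
  set A := adjMat E with hAdef
  ext lam
  simp only [compSpec, Set.mem_setOf_eq]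
  constructor
  · rintro ⟨x, hx0, hxnn, hge, hdot⟩
    have hxnn' : ∀ i, 0 ≤ x i := fun i => hxnn i
    have hge' : ∀ i, lam * x i ≤ A.mulVec x i := by
      intro i
      have := hge i
      simp only [Pi.sub_apply, Pi.smul_apply, smul_eq_mul, Pi.zero_apply] at this
      linarith
    have hsupp : ∀ i, 0 < x i → A.mulVec x i = lam * x i := by
      intro i hi
      have hterm : ∀ j ∈ Finset.univ, x j * (A.mulVec x - lam • x) j = 0 := by
        apply (Finset.sum_eq_zero_iff_of_nonneg ?_).mp
        · exact hdot
        · intro j _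
          exact mul_nonneg (hxnn' j) (hge j)
      have := hterm i (Finset.mem_univ i)
      simp only [Pi.sub_apply, Pi.smul_apply, smul_eq_mul] at this
      rcases mul_eq_zero.mp this with h | h
      · exact absurd h hi.ne'
      · linarith
    set S : Set V := {i | 0 < x i} with hSdef
    have hSne : S.Nonempty := by
      obtain ⟨i, hi⟩ := Function.ne_iff.mp hx0
      exact ⟨i, lt_of_le_of_ne (hxnn' i) (Ne.symm hi)⟩
    set ES : V → V → Prop := fun a b => a ∈ S ∧ b ∈ S ∧ E a b with hESdef
    set Down : V → Set V := fun v => {u | Relation.ReflTransGen ES v u} with hDown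
    set g : V → ℕ := fun v => (Down v).ncard with hg
    have hgne : (g '' S).Nonempty := hSne.image g
    obtain ⟨v₀, hv₀S, hv₀g⟩ := Nat.sInf_mem hgne
    have hmin : ∀ u ∈ S, g v₀ ≤ g u := fun u hu => hv₀g ▸ Nat.sInf_le ⟨u, hu, rfl⟩
    set C : Set V := Down v₀ with hC
    have hv₀C : v₀ ∈ C := Relation.ReflTransGen.refl
    have hCS : C ⊆ S := by
      intro u hu
      rcases Relation.ReflTransGen.cases_tail hu with h | ⟨b, _, hbu⟩
      · rw [h]; exact hv₀S
      · exact hbu.2.1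
    have hdown : ∀ a ∈ C, ∀ b, Relation.ReflTransGen ES a b → b ∈ C :=
      fun a ha b hab => Relation.ReflTransGen.trans ha hab
    have hback : ∀ u ∈ C, Relation.ReflTransGen ES u v₀ := by
      intro u hu
      have hsub : Down u ⊆ C := fun w hw => hdown u hu w hw
      have heq : Down u = C :=
        Set.eq_of_subset_of_ncard_le hsub (hmin u (hCS hu)) (Set.toFinite C)
      have : v₀ ∈ Down u := heq ▸ hv₀C
      exact this
    have hCne : C.Nonempty := ⟨v₀, hv₀C⟩
    have haux : ∀ a b, Relation.ReflTransGen ES a b →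
        ∀ (ha : a ∈ C) (hb : b ∈ C),
          Relation.ReflTransGen (induceRel E C) ⟨a, ha⟩ ⟨b, hb⟩ := by
      intro a b hab
      induction hab using Relation.ReflTransGen.head_induction_on with
      | refl => intro _ _; exact Relation.ReflTransGen.refl
      | @head a' c hac hcb ih =>
        intro ha hb
        have hc : c ∈ C := hdown a' ha c (Relation.ReflTransGen.single hac)
        exact Relation.ReflTransGen.head (show induceRel E C ⟨a', ha⟩ ⟨c, hc⟩ from hac.2.2) (ih hc hb)
    have hSC : StronglyConnected (induceRel E C) := by
      rintro ⟨u, hu⟩ ⟨w, hw⟩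
      exact haux u w (Relation.ReflTransGen.trans (hback u hu) hw) hu hw
    haveI : Nonempty C := hCne.to_subtype
    set y : C → ℝ := fun j => x j.1 with hy
    have hypos : ∀ j, 0 < y j := fun j => hCS j.2
    have heigC : (adjMat (induceRel E C)).mulVec y = lam • y := by
      funext j
      obtain ⟨i, hi⟩ := j
      have hvanish : ∀ v, v ∉ C → (if E i v then (1:ℝ) else 0) * x v = 0 := by
        intro v hv
        by_cases hEv : E i v
        · simp only [hEv, if_true, one_mul]
          by_contra hxv
          have hvS : v ∈ S := lt_of_le_of_ne (hxnn' v) (Ne.symm hxv)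
          exact hv (hdown i hi v (Relation.ReflTransGen.single ⟨hCS hi, hvS, hEv⟩))
        · simp [hEv]
      have hls : (adjMat (induceRel E C)).mulVec y ⟨i, hi⟩
          = ∑ v : C, (if E i v.1 then (1:ℝ) else 0) * x v.1 := by
        simp [Matrix.mulVec, dotProduct, adjMat, induceRel, hy, boole_mul]
        exact Finset.sum_congr rfl fun v _ => by split_ifs with h; exact (congrArg (fun t => t * x v.1) (if_pos h)).trans (one_mul _); exact mul_eq_zero_of_left (if_neg h) _
      rw [hls, sum_coe C (fun v => (if E i v then (1:ℝ) else 0) * x v) hvanish]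
      have : ∑ v, (if E i v then (1:ℝ) else 0) * x v = A.mulVec x i := by
        simp [hAdef, Matrix.mulVec, dotProduct, adjMat]
      rw [this, hsupp i (hCS hi)]
      rfl
    have hfin := matSpecRad_eq_of_pos_eigen (adjMat (induceRel E C))
      (adjMat_nonneg _) y hypos lam heigC
    refine ⟨C, hCne, hSC, ?_⟩
    rw [specRadOn_eq E C, hfin]
  · rintro ⟨S, hSne, hSC, rfl⟩
    haveI : Nonempty S := hSne.to_subtype
    rw [specRadOn_eq E S]
    obtain ⟨y, hypos, heig⟩ := perron (induceRel E S) (fun u v => hSC u v)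
    set r := matSpecRad (adjMat (induceRel E S)) with hr
    set X : V → ℝ := fun v => if h : v ∈ S then y ⟨v, h⟩ else 0 with hX
    have hXnn : ∀ v, 0 ≤ X v := by
      intro v
      by_cases h : v ∈ S
      · simp only [hX, dif_pos h]; exact (hypos _).le
      · simp [hX, dif_neg h]
    have hcomp : ∀ i, ∀ hi : i ∈ S, A.mulVec X i = r * X i := by
      intro i hi
      have hvanish : ∀ v, v ∉ S → (if E i v then (1:ℝ) else 0) * X v = 0 := by
        intro v hv
        simp [hX, dif_neg hv]
      have h1 : A.mulVec X i = ∑ v, (if E i v then (1:ℝ) else 0) * X v := by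
        simp [hAdef, Matrix.mulVec, dotProduct, adjMat]
      rw [h1, ← sum_coe S (fun v => (if E i v then (1:ℝ) else 0) * X v) hvanish]
      have h2 : ∀ v : S, (if E i v.1 then (1:ℝ) else 0) * X v.1
          = adjMat (induceRel E S) ⟨i, hi⟩ v * y v := by
        intro v
        simp only [hX, dif_pos v.2, adjMat, induceRel, Matrix.of_apply]
        rfl
      rw [Finset.sum_congr rfl fun v _ => h2 v]
      have h3 : ∑ v : S, adjMat (induceRel E S) ⟨i, hi⟩ v * y v
          = (adjMat (induceRel E S)).mulVec y ⟨i, hi⟩ := rfl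
      rw [h3, heig]
      simp only [Pi.smul_apply, smul_eq_mul, hX, dif_pos hi]
    have hXApos : ∀ i, 0 ≤ A.mulVec X i := by
      intro i
      exact Finset.sum_nonneg fun j _ => mul_nonneg (adjMat_nonneg E i j) (hXnn j)
    obtain ⟨s₀, hs₀⟩ := hSne
    refine ⟨X, ?_, ?_, ?_, ?_⟩
    · intro h
      have := congrFun h s₀
      simp only [hX, dif_pos hs₀, Pi.zero_apply] at this
      exact (hypos ⟨s₀, hs₀⟩).ne' this
    · exact fun v => hXnn v
    · intro i
      simp only [Pi.sub_apply, Pi.smul_apply, smul_eq_mul, Pi.zero_apply]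
      by_cases h : i ∈ S
      · rw [hcomp i h]; linarith
      · have : X i = 0 := by simp [hX, dif_neg h]
        rw [this]
        have := hXApos i
        linarith
    · apply Finset.sum_eq_zero
      intro i _
      by_cases h : i ∈ S
      · have := hcomp i h
        simp only [Pi.sub_apply, Pi.smul_apply, smul_eq_mul, this]
        ring
      · have : X i = 0 := by simp [hX, dif_neg h]
        rw [this, zero_mul]
end
end

section
/- If D is a digraph with strongly connected components D_1, …, D_k, then the complementarity spectrum of D equals the union of the complementarity spectra of the D_i. -/
open Matrix
open scoped Classical

noncomputable section

lemma sum_subtype_eq {V : Type*} [Fintype V] (S : Set V) [Fintype ↥S] (g : V → ℝ)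
    (hg : ∀ j ∉ S, g j = 0) : ∑ j : ↥S, g j.1 = ∑ j, g j := by
  rw [← Finset.sum_subtype (Finset.univ.filter (· ∈ S)) (by simp) g]
  exact Finset.sum_subset (Finset.subset_univ _) (by intro j _ hj; exact hg j (by simpa using hj))


lemma ext_lemma {V : Type*} [Fintype V] (E : V → V → Prop) (S : Set V) [Fintype ↥S] {lam : ℝ}
    (h : lam ∈ compSpec (adjMat (induceRel E S))) : lam ∈ compSpec (adjMat E) := by
  obtain ⟨x, hx0, hxnn, hge, hdot⟩ := h
  set xe : V → ℝ := fun u => if h : u ∈ S then x ⟨u, h⟩ else 0 with hxe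
  have hxe_zero : ∀ u ∉ S, xe u = 0 := fun u hu => dif_neg hu
  have hxe_mem : ∀ i : ↥S, xe i.1 = x i := fun i => by simp [hxe, i.2]
  have hxenn : ∀ u, 0 ≤ xe u := by
    intro u; by_cases hu : u ∈ S
    · simp only [hxe, dif_pos hu]; exact hxnn _
    · rw [hxe_zero u hu]
  have key1 : ∀ i : ↥S, (adjMat E).mulVec xe i.1 = (adjMat (induceRel E S)).mulVec x i := by
    intro i
    have : ∀ j : ↥S, (if E i.1 j.1 then (1:ℝ) else 0) * xe j.1
        = (if E i.1 j.1 then (1:ℝ) else 0) * x j := fun j => by rw [hxe_mem]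
    simp only [Matrix.mulVec, dotProduct, adjMat, induceRel, Matrix.of_apply]
    rw [← sum_subtype_eq S (fun j => (if E i.1 j then (1:ℝ) else 0) * xe j)
      (by intro j hj; show (if E (i.1) j then (1:ℝ) else 0) * xe j = 0; rw [hxe_zero j hj, mul_zero])]
    exact Finset.sum_congr rfl (fun j _ => this j)
  have key0 : ∀ u, 0 ≤ (adjMat E).mulVec xe u := by
    intro u
    apply Finset.sum_nonneg
    intro j _
    exact mul_nonneg (by simp only [adjMat, Matrix.of_apply]; split <;> norm_num) (hxenn j)
  refine ⟨xe, ?_, fun u => hxenn u, ?_, ?_⟩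
  · obtain ⟨i, hi⟩ := Function.ne_iff.1 hx0
    exact Function.ne_iff.2 ⟨i.1, by rw [hxe_mem i]; simpa using hi⟩
  · intro u
    simp only [Pi.sub_apply, Pi.smul_apply, Pi.zero_apply, smul_eq_mul]
    by_cases hu : u ∈ S
    · have := hge ⟨u, hu⟩
      simp only [Pi.sub_apply, Pi.smul_apply, Pi.zero_apply, smul_eq_mul] at this
      rw [key1 ⟨u, hu⟩, hxe_mem ⟨u, hu⟩]
      exact this
    · rw [hxe_zero u hu, mul_zero, sub_zero]; exact key0 u
  · simp only [dotProduct, Pi.sub_apply, Pi.smul_apply, smul_eq_mul] at hdot ⊢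
    rw [← sum_subtype_eq S (fun u => xe u * ((adjMat E).mulVec xe u - lam * xe u))
      (by intro u hu; show xe u * ((adjMat E).mulVec xe u - lam * xe u) = 0; rw [hxe_zero u hu, zero_mul])]
    rw [← hdot]
    exact Finset.sum_congr rfl (fun i _ => by rw [hxe_mem i, key1 i])

lemma restrict_lemma {V : Type*} [Fintype V] (E : V → V → Prop) {lam : ℝ} {x : V → ℝ}
    (hxnn : 0 ≤ x) (hge : 0 ≤ (adjMat E).mulVec x - lam • x)
    (hdot : x ⬝ᵥ ((adjMat E).mulVec x - lam • x) = 0)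
    (v : V) (hv : x v ≠ 0)
    (hmin : ∀ u, x u ≠ 0 → Reach E v u → Reach E u v)
    [Fintype ↥(component E v)] :
    lam ∈ compSpec (adjMat (induceRel E (component E v))) := by
  set y : ↥(component E v) → ℝ := fun i => x i.1 with hy
  -- entries nonneg
  have hA : ∀ (W : Type _) (F : W → W → Prop) (a b : W), 0 ≤ adjMat F a b := by
    intro W F a b; simp only [adjMat, Matrix.of_apply]; split <;> norm_num
  -- termwise complementarity
  have hterm : ∀ u, x u * ((adjMat E).mulVec x u - lam * x u) = 0 := by
    have h2 : ∀ u ∈ Finset.univ, 0 ≤ x u * ((adjMat E).mulVec x u - lam * x u) := by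
      intro u _
      have := hge u
      simp only [Pi.sub_apply, Pi.smul_apply, Pi.zero_apply, smul_eq_mul] at this
      exact mul_nonneg (hxnn u) this
    have := (Finset.sum_eq_zero_iff_of_nonneg h2).1 (by
      simpa only [dotProduct, Pi.sub_apply, Pi.smul_apply, smul_eq_mul] using hdot)
    exact fun u => this u (Finset.mem_univ u)
  have heig : ∀ u, x u ≠ 0 → (adjMat E).mulVec x u = lam * x u := by
    intro u hu
    have h := (mul_eq_zero.1 (hterm u)).resolve_left hu
    linarith [sub_eq_zero.1 h]
  -- the closure claim
  have hstep : ∀ i : V, i ∈ (component E v) → x i ≠ 0 → ∀ j, E i j → x j ≠ 0 → j ∈ (component E v) := by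
    intro i hi hxi j hij hxj
    have hvi : Reach E v i := hi.2
    have hvj : Reach E v j := Relation.ReflTransGen.tail hvi hij
    exact ⟨hmin j hxj hvj, hvj⟩
  have hvS : v ∈ (component E v) := ⟨Relation.ReflTransGen.refl, Relation.ReflTransGen.refl⟩
  -- mulVec computation for support rows
  have key1 : ∀ i : ↥(component E v), x i.1 ≠ 0 →
      (adjMat (induceRel E (component E v))).mulVec y i = (adjMat E).mulVec x i.1 := by
    intro i hxi
    show (∑ j : ↥(component E v), (if E i.1 j.1 then (1:ℝ) else 0) * x j.1) = _
    rw [sum_subtype_eq (component E v) (fun j => (if E (i.1) j then (1:ℝ) else 0) * x j) (by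
      intro j hj
      show (if E (i.1) j then (1:ℝ) else 0) * x j = 0
      by_cases hE : E i.1 j
      · rw [if_pos hE]
        by_cases hxj : x j = 0
        · rw [hxj, mul_zero]
        · exact absurd (hstep i.1 i.2 hxi j hE hxj) hj
      · rw [if_neg hE, zero_mul])]
    rfl
  have key0 : ∀ i : ↥(component E v), 0 ≤ (adjMat (induceRel E (component E v))).mulVec y i := by
    intro i
    apply Finset.sum_nonneg
    intro j _
    exact mul_nonneg (hA _ _ _ _) (hxnn j.1)
  refine ⟨y, ?_, fun i => hxnn i.1, ?_, ?_⟩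
  · exact Function.ne_iff.2 ⟨⟨v, hvS⟩, hv⟩
  · intro i
    simp only [Pi.sub_apply, Pi.smul_apply, Pi.zero_apply, smul_eq_mul]
    by_cases hxi : x i.1 = 0
    · show (0:ℝ) ≤ _ - lam * y i
      rw [hy]; simp only []
      rw [hxi, mul_zero, sub_zero]
      exact key0 i
    · rw [key1 i hxi, heig i.1 hxi]
      show (0:ℝ) ≤ lam * x i.1 - lam * y i
      simp [hy]
  · simp only [dotProduct, Pi.sub_apply, Pi.smul_apply, smul_eq_mul]
    apply Finset.sum_eq_zero
    intro i _
    by_cases hxi : x i.1 = 0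
    · show y i * _ = 0
      simp [hy, hxi]
    · rw [key1 i hxi, heig i.1 hxi]
      show y i * (lam * x i.1 - lam * y i) = 0
      simp [hy]

lemma exists_min_vertex {V : Type*} [Fintype V] (E : V → V → Prop) (x : V → ℝ) (hx : x ≠ 0) :
    ∃ v, x v ≠ 0 ∧ ∀ u, x u ≠ 0 → Reach E v u → Reach E u v := by
  have hne : (Finset.univ.filter (fun u => x u ≠ 0)).Nonempty := by
    obtain ⟨v, hv⟩ := Function.ne_iff.1 hx
    exact ⟨v, Finset.mem_filter.2 ⟨Finset.mem_univ v, by simpa using hv⟩⟩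
  obtain ⟨v, hvmem, hvmin⟩ := Finset.exists_min_image (Finset.univ.filter (fun u => x u ≠ 0))
    (fun u => (Finset.univ.filter (fun w => Reach E u w)).card) hne
  refine ⟨v, by simpa using hvmem, ?_⟩
  intro u hu hvu
  have hsub : Finset.univ.filter (fun w => Reach E u w) ⊆
      Finset.univ.filter (fun w => Reach E v w) := by
    intro w hw
    simp only [Finset.mem_filter, Finset.mem_univ, true_and] at hw ⊢
    exact hvu.trans hw
  have hcard := hvmin u (by simp [hu])
  have heq := Finset.eq_of_subset_of_card_le hsub hcard
  have : v ∈ Finset.univ.filter (fun w => Reach E u w) := by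
    rw [heq]
    exact Finset.mem_filter.2 ⟨Finset.mem_univ v, Relation.ReflTransGen.refl⟩
  simpa [Reach] using (Finset.mem_filter.1 this).2

/-- the complementarity spectrum of a digraph is the union of the
complementarity spectra of its strongly connected components. -/
theorem stmt6 {V : Type*} [Fintype V] (E : V → V → Prop) :
    compSpec (adjMat E) = ⋃ v : V, compSpecOn E (component E v) := by
  ext lam
  simp only [Set.mem_iUnion]
  constructor
  · rintro ⟨x, hx0, hxnn, hge, hdot⟩
    obtain ⟨v, hv, hmin⟩ := exists_min_vertex E x hx0
    refine ⟨v, ?_⟩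
    show lam ∈ @compSpec _ ((component E v).toFinite.fintype)
      (adjMat (induceRel E (component E v)))
    exact @restrict_lemma V _ E lam x hxnn hge hdot v hv hmin
      ((component E v).toFinite.fintype)
  · rintro ⟨v, h⟩
    exact @ext_lemma V _ E (component E v) ((component E v).toFinite.fintype) lam h
end
end

section
/- A finite digraph D has complementarity spectrum equal to {0} if and only if D is acyclic. -/
open Matrix
open scoped Classical

noncomputable section

section AuxStmt7

variable {V : Type*}

lemma adjMat_entry_nonneg (E : V → V → Prop) (i j : V) : (0:ℝ) ≤ adjMat E i j := by
  unfold adjMat; simp only [Matrix.of_apply]; split <;> norm_num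

lemma transGen_path {E : V → V → Prop} {a b : V} (h : Relation.TransGen E a b) :
    ∃ k, 0 < k ∧ ∃ c : ℕ → V, c 0 = a ∧ c k = b ∧ ∀ i < k, E (c i) (c (i+1)) := by
  induction h with
  | @single w h =>
    refine ⟨1, one_pos, fun n => if n = 0 then a else w, by simp, by simp, ?_⟩
    intro i hi
    have : i = 0 := by omega
    subst this; simpa using h
  | @tail b' c' hab h ih =>
    obtain ⟨k, hk, c, hc0, hck, hce⟩ := ih
    refine ⟨k+1, by omega, fun n => if n ≤ k then c n else c', by simp [hc0], by simp, ?_⟩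
    intro i hi
    rcases Nat.lt_or_ge i k with h1 | h1
    · simpa [Nat.le_of_lt h1, Nat.succ_le_of_lt h1] using hce i h1
    · have : i = k := by omega
      subst this
      simpa [hck] using h

lemma exists_closed_walk {E : V → V → Prop} {v : V}
    (h : Relation.TransGen E v v) :
    ∃ n, 0 < n ∧ ∃ c : ℕ → V, Function.Periodic c n ∧ ∀ i, E (c i) (c (i+1)) := by
  obtain ⟨k, hk, c, hc0, hck, hce⟩ := transGen_path h
  refine ⟨k, hk, fun i => c (i % k), fun i => by simp [Nat.add_mod_right], fun i => ?_⟩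
  have h1 : i % k < k := Nat.mod_lt _ hk
  have hE := hce _ h1
  have hmod : (i % k + 1) % k = (i + 1) % k := Nat.mod_add_mod i k 1
  have : c (i % k + 1) = c ((i+1) % k) := by
    rcases eq_or_lt_of_le (show i % k + 1 ≤ k by omega) with h2 | h2
    · rw [h2, hck, ← hmod, h2, Nat.mod_self, hc0]
    · rw [← hmod, Nat.mod_eq_of_lt h2]
  simpa [this] using hE

lemma exists_min_walk {E : V → V → Prop} {v : V}
    (h : Relation.TransGen E v v) :
    ∃ n, 0 < n ∧ ∃ c : ℕ → V, Function.Periodic c n ∧ (∀ i, E (c i) (c (i+1))) ∧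
      ∀ i j, E (c i) (c j) → c j = c (i + 1) := by
  classical
  have hK : ∃ n, 0 < n ∧ ∃ c : ℕ → V, Function.Periodic c n ∧ ∀ i, E (c i) (c (i+1)) :=
    exists_closed_walk h
  obtain ⟨hm0, c, hper, hedge⟩ := Nat.find_spec hK
  set m := Nat.find hK with hm
  refine ⟨m, hm0, c, hper, hedge, ?_⟩
  have hshift : ∀ a t, c (a + t * m) = c a := by
    intro a t
    induction t with
    | zero => simp
    | succ t ih =>
      have : a + (t+1) * m = (a + t * m) + m := by ring
      rw [this, hper, ih]
  have main : ∀ i L, E (c i) (c (i + 1 + L)) → c (i + 1 + L) = c (i + 1) := by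
    intro i L hE
    set L' := L % m with hL'
    have hcL : c (i + 1 + L) = c (i + 1 + L') := by
      conv_lhs => rw [show L = L' + L / m * m from by
        rw [hL']; exact (Nat.mod_add_div' L m).symm]
      rw [← Nat.add_assoc, hshift]
    rcases Nat.eq_zero_or_pos L' with h0 | hpos
    · rw [hcL, h0]
    · exfalso
      have hL'lt : L' < m := Nat.mod_lt _ hm0
      set t := m - 1 - L' with ht
      have htm : 1 + L' + t = m := by omega
      have hnew : 0 < t + 1 ∧ ∃ d : ℕ → V,
          Function.Periodic d (t+1) ∧ ∀ s, E (d s) (d (s+1)) := by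
        refine ⟨Nat.succ_pos t, fun s => c (i + 1 + L' + s % (t+1)),
          fun s => by simp [Nat.add_mod_right], fun s => ?_⟩
        dsimp only
        have hs : s % (t+1) < t + 1 := Nat.mod_lt _ (Nat.succ_pos t)
        have hmod : (s % (t+1) + 1) % (t+1) = (s + 1) % (t+1) := Nat.mod_add_mod s (t+1) 1
        rcases eq_or_lt_of_le (show s % (t+1) + 1 ≤ t + 1 by omega) with he | hlt
        · -- wrap-around step
          have h1 : s % (t+1) = t := by omega
          have h2 : (s+1) % (t+1) = 0 := by rw [← hmod, h1, Nat.mod_self]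
          have h3 : i + 1 + L' + t = i + 1 * m := by omega
          have h4 : c (i + 1 + L' + s % (t+1)) = c i := by rw [h1, h3, hshift]
          have h5 : c (i + 1 + L' + (s+1) % (t+1)) = c (i + 1 + L) := by
            rw [h2, Nat.add_zero, ← hcL]
          rw [h4, h5]; exact hE
        · have h2 : (s+1) % (t+1) = s % (t+1) + 1 := by
            rw [← hmod, Nat.mod_eq_of_lt hlt]
          rw [h2, ← Nat.add_assoc]
          exact hedge _
      exact Nat.find_min hK (show t + 1 < m by omega) hnew
  intro i j hE
  have hmge : i + 1 ≤ (i+1) * m := Nat.le_mul_of_pos_right _ hm0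
  set L := j + (i+1) * m - (i+1) with hLdef
  have hN : i + 1 + L = j + (i+1) * m := by omega
  have hcj : c (i + 1 + L) = c j := by rw [hN, hshift]
  have := main i L (by rw [hcj]; exact hE)
  rw [← hcj, this]

lemma one_mem_compSpec_of_cycle [Fintype V] {E : V → V → Prop} {v : V}
    (h : Relation.TransGen E v v) : (1:ℝ) ∈ compSpec (adjMat E) := by
  classical
  obtain ⟨m, hm0, c, hper, hedge, hchord⟩ := exists_min_walk h
  set x : V → ℝ := fun u => if u ∈ Set.range c then 1 else 0 with hxdef
  have hxnn : (0:V → ℝ) ≤ x := by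
    intro u; rw [hxdef]; dsimp only; split <;> norm_num
  have hxr : ∀ i : ℕ, x (c i) = 1 := by
    intro i; rw [hxdef]; dsimp only; rw [if_pos ⟨i, rfl⟩]
  have hAx : ∀ i : ℕ, (adjMat E).mulVec x (c i) = 1 := by
    intro i
    have hterm : ∀ w : V, adjMat E (c i) w * x w = if w = c (i+1) then 1 else 0 := by
      intro w
      by_cases hw : w = c (i+1)
      · subst hw
        rw [if_pos rfl, hxr]
        simp [adjMat, hedge i]
      · rw [if_neg hw]
        by_cases hE : E (c i) w
        · have hx0 : x w = 0 := by
            rw [hxdef]; dsimp only; rw [if_neg]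
            rintro ⟨j, rfl⟩
            exact hw (hchord i j hE)
          rw [hx0, mul_zero]
        · simp [adjMat, hE]
    rw [Matrix.mulVec, dotProduct]
    calc ∑ w, adjMat E (c i) w * x w = ∑ w, if w = c (i+1) then (1:ℝ) else 0 :=
          Finset.sum_congr rfl fun w _ => hterm w
      _ = 1 := by simp
  have hANx : ∀ u : V, u ∉ Set.range c → 0 ≤ (adjMat E).mulVec x u := by
    intro u _
    rw [Matrix.mulVec, dotProduct]
    exact Finset.sum_nonneg fun w _ => mul_nonneg (adjMat_entry_nonneg E u w) (hxnn w)
  have hdiff : ∀ u : V, x u * ((adjMat E).mulVec x - (1:ℝ) • x) u = 0 ∧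
      0 ≤ ((adjMat E).mulVec x - (1:ℝ) • x) u := by
    intro u
    by_cases hu : u ∈ Set.range c
    · obtain ⟨i, rfl⟩ := hu
      have : ((adjMat E).mulVec x - (1:ℝ) • x) (c i) = 0 := by
        simp [hAx i, hxr i]
      exact ⟨by rw [this, mul_zero], le_of_eq this.symm⟩
    · have hx0 : x u = 0 := by
        rw [hxdef]; dsimp only; rw [if_neg hu]
      refine ⟨by rw [hx0, zero_mul], ?_⟩
      have := hANx u hu
      simp [hx0]
      simpa [hx0] using this
  refine ⟨x, ?_, hxnn, fun u => (hdiff u).2, ?_⟩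
  · intro hx0
    have := hxr 0
    rw [hx0] at this
    simp at this
  · rw [dotProduct]
    exact Finset.sum_eq_zero fun u _ => (hdiff u).1

lemma acyclic_wf [Finite V] {E : V → V → Prop} (hA : Acyclic E) :
    WellFounded (fun a b => Relation.TransGen E b a) := by
  have h1 : IsTrans V (fun a b => Relation.TransGen E b a) := ⟨fun a b c h1 h2 => h2.trans h1⟩
  have h2 : IsIrrefl V (fun a b => Relation.TransGen E b a) := ⟨fun a => hA a⟩
  exact Finite.wellFounded_of_trans_of_irrefl _

lemma zero_mem_compSpec_of_acyclic [Fintype V] [Nonempty V] {E : V → V → Prop}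
    (hA : Acyclic E) : (0:ℝ) ∈ compSpec (adjMat E) := by
  classical
  obtain ⟨v, -, hmin⟩ := (acyclic_wf hA).has_min Set.univ ⟨Classical.arbitrary V, trivial⟩
  have hsink : ∀ w, ¬ E v w := fun w hw => hmin w trivial (Relation.TransGen.single hw)
  set x : V → ℝ := fun u => if u = v then 1 else 0 with hxdef
  have hAx : ∀ u, (adjMat E).mulVec x u = adjMat E u v := by
    intro u
    rw [Matrix.mulVec, dotProduct]
    calc ∑ w, adjMat E u w * x w = ∑ w, if w = v then adjMat E u w else 0 := by
          refine Finset.sum_congr rfl fun w _ => ?_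
          rw [hxdef]; dsimp only
          split <;> simp
      _ = adjMat E u v := by simp
  refine ⟨x, ?_, ?_, ?_, ?_⟩
  · intro h0
    have : x v = 0 := by rw [h0]; rfl
    rw [hxdef] at this; simp at this
  · intro u; rw [hxdef]; dsimp only; split <;> norm_num
  · intro u
    simp only [Pi.sub_apply, Pi.smul_apply, zero_smul, sub_zero, Pi.zero_apply, smul_eq_mul,
      zero_mul]
    rw [hAx]
    exact adjMat_entry_nonneg E u v
  · rw [dotProduct]
    refine Finset.sum_eq_zero fun u _ => ?_
    by_cases hu : u = v
    · subst hu
      have : adjMat E u u = 0 := by simp [adjMat, hsink u]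
      simp [hAx, this]
    · have : x u = 0 := by rw [hxdef]; dsimp only; rw [if_neg hu]
      simp [this]

lemma compSpec_eq_zero_of_acyclic [Fintype V] {E : V → V → Prop} (hA : Acyclic E)
    {lam : ℝ} (hl : lam ∈ compSpec (adjMat E)) : lam = 0 := by
  classical
  obtain ⟨x, hx0, hxnn, hge, hdot⟩ := hl
  have hterm : ∀ u, x u * ((adjMat E).mulVec x - lam • x) u = 0 := by
    have hnn : ∀ u ∈ Finset.univ, 0 ≤ x u * ((adjMat E).mulVec x - lam • x) u :=
      fun u _ => mul_nonneg (hxnn u) (hge u)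
    have := (Finset.sum_eq_zero_iff_of_nonneg hnn).mp (by rw [← dotProduct]; exact hdot)
    exact fun u => this u (Finset.mem_univ u)
  have hsupp : ∃ u, 0 < x u := by
    obtain ⟨u, hu⟩ := Function.ne_iff.mp hx0
    exact ⟨u, lt_of_le_of_ne (hxnn u) (Ne.symm hu)⟩
  obtain ⟨v, hv, hmin⟩ := (acyclic_wf hA).has_min {u | 0 < x u} hsupp
  have hcomp : (adjMat E).mulVec x v = lam * x v := by
    have := hterm v
    have h2 : ((adjMat E).mulVec x - lam • x) v = 0 :=
      (mul_eq_zero.mp this).resolve_left (ne_of_gt hv)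
    have h3 : (adjMat E).mulVec x v - lam * x v = 0 := by simpa using h2
    linarith
  have hAxnn : 0 ≤ (adjMat E).mulVec x v := by
    rw [Matrix.mulVec, dotProduct]
    exact Finset.sum_nonneg fun w _ => mul_nonneg (adjMat_entry_nonneg E v w) (hxnn w)
  have hxv : 0 < x v := hv
  rcases lt_trichotomy lam 0 with hneg | h0 | hpos
  · nlinarith [mul_neg_of_neg_of_pos hneg hxv]
  · exact h0
  · exfalso
    have hAxpos : 0 < (adjMat E).mulVec x v := by
      rw [hcomp]; exact mul_pos hpos hxv
    rw [Matrix.mulVec, dotProduct] at hAxpos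
    obtain ⟨w, -, hw⟩ := Finset.exists_lt_of_sum_lt
      (show ∑ w : V, (0:ℝ) < ∑ w : V, adjMat E v w * x w by simpa using hAxpos)
    have hEvw : E v w := by
      by_contra hE
      simp [adjMat, hE] at hw
    have hxnnw : (0:ℝ) ≤ x w := hxnn w
    have hxw : 0 < x w := by
      rcases lt_or_eq_of_le hxnnw with h | h
      · exact h
      · rw [← h, mul_zero] at hw; exact absurd hw (lt_irrefl 0)
    exact hmin w hxw (Relation.TransGen.single hEvw)

end AuxStmt7

/-- `Π(D) = {0}` iff `D` is acyclic. -/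
theorem stmt7 {V : Type*} [Fintype V] [Nonempty V] (E : V → V → Prop) :
    compSpec (adjMat E) = {0} ↔ Acyclic E := by
  constructor
  · intro hspec
    intro v hv
    have h1 : (1:ℝ) ∈ compSpec (adjMat E) := one_mem_compSpec_of_cycle hv
    rw [hspec] at h1
    exact one_ne_zero h1
  · intro hA
    ext lam
    constructor
    · intro hl
      exact compSpec_eq_zero_of_acyclic hA hl
    · intro hl
      rw [Set.mem_singleton_iff] at hl
      subst hl
      exact zero_mem_compSpec_of_acyclic hA
end
end

section
/- If a finite digraph D contains at least one directed cycle, then 1 is a complementarity eigenvalue of D. -/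
open Matrix
open scoped Classical

noncomputable section

lemma get_congr {V : Type*} (L : List V) (j j' : ℕ) (hj : j < L.length) (hj' : j' < L.length)
    (h : j = j') : L.get ⟨j, hj⟩ = L.get ⟨j', hj'⟩ := by subst h; rfl

-- step 1: extract a ZMod walk
lemma exists_zmod_walk {V : Type*} (E : V → V → Prop)
    (h : ∃ v, Relation.TransGen E v v) :
    ∃ n, 0 < n ∧ ∃ g : ZMod n → V, ∀ i, E (g i) (g (i + 1)) := by
  obtain ⟨v, hv⟩ := h
  rw [Relation.TransGen.head'_iff] at hv
  obtain ⟨w, hvw, hwv⟩ := hv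
  obtain ⟨l, hl, hlast⟩ := List.exists_isChain_cons_of_relationReflTransGen hwv
  set L : List V := v :: w :: l with hL
  have hchain : L.Chain' E := List.isChain_cons_cons.mpr ⟨hvw, hl⟩
  obtain ⟨n, hn⟩ : ∃ n, l.length + 1 = n := ⟨_, rfl⟩
  have hnpos : 0 < n := by omega
  haveI : NeZero n := ⟨by omega⟩
  have hLlen : L.length = n + 1 := by simp [hL]; omega
  have hlt : ∀ i : ZMod n, i.val < n := fun i => ZMod.val_lt i
  refine ⟨n, hnpos, fun i => L.get ⟨i.val, by have := hlt i; omega⟩, ?_⟩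
  intro i
  have hiv : i.val < n := hlt i
  have hsucc : (i + 1).val = (i.val + 1) % n := by
    rw [ZMod.val_add, ← Nat.cast_one (R := ZMod n), ZMod.val_natCast]
    conv_rhs => rw [Nat.add_mod]
    rw [Nat.add_mod i.val (1 % n), Nat.mod_mod_of_dvd _ dvd_rfl]
  have hget : ∀ (j : ℕ) (hj : j < n), E (L.get ⟨j, by omega⟩) (L.get ⟨j + 1, by omega⟩) := by
    intro j hj
    exact List.isChain_iff_getElem.mp hchain j (by omega)
  have hsucclt : (i + 1).val < n := hlt _
  show E (L.get ⟨i.val, by omega⟩) (L.get ⟨(i+1).val, by omega⟩)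
  by_cases hcase : i.val + 1 < n
  · have h2 : (i + 1).val = i.val + 1 := by rw [hsucc]; exact Nat.mod_eq_of_lt hcase
    rw [get_congr L _ (i.val + 1) _ (by omega) h2]
    exact hget i.val hiv
  · have h1 : i.val + 1 = n := by omega
    have h2 : (i + 1).val = 0 := by rw [hsucc, h1, Nat.mod_self]
    have hLn : L.get ⟨n, by omega⟩ = v := by
      rw [get_congr L n (l.length + 1) _ (by omega) (by omega)]
      have e1 : L.get ⟨l.length + 1, by omega⟩ = (w :: l).get ⟨l.length, by simp⟩ := rfl
      rw [e1, get_congr (w::l) l.length ((w::l).length - 1) _ (by simp) (by simp),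
        List.get_eq_getElem, ← List.getLast_eq_getElem (List.cons_ne_nil _ _)]
      exact hlast
    have h5 := hget i.val hiv
    rw [get_congr L (i+1).val 0 _ (by omega) h2, show (L.get ⟨0, by omega⟩ : V) = v from rfl,
      ← hLn, get_congr L n (i.val+1) _ (by omega) h1.symm]
    exact h5

-- step 2: from a shortest closed walk, every arc within it goes to the successor
lemma chord_lemma {V : Type*} (E : V → V → Prop) (k : ℕ) (hk : 0 < k)
    (g : ZMod k → V) (hg : ∀ i, E (g i) (g (i + 1)))
    (hmin : ∀ m, 0 < m → m < k → ¬ ∃ g' : ZMod m → V, ∀ i, E (g' i) (g' (i + 1)))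
    (a b : ZMod k) (hab : E (g a) (g b)) : b = a + 1 := by
  haveI : NeZero k := ⟨by omega⟩
  by_contra hne
  have hcastval : ∀ x : ZMod k, ((x.val : ℕ) : ZMod k) = x := by
    intro x; rw [ZMod.natCast_val, ZMod.cast_id]
  set m : ℕ := (a - b).val + 1 with hm
  have hmpos : 0 < m := by omega
  haveI : NeZero m := ⟨by omega⟩
  have hvallt : (a - b).val < k := ZMod.val_lt _
  have hmk : m < k := by
    rcases lt_or_eq_of_le (Nat.succ_le_of_lt hvallt) with h | h
    · omega
    · exfalso
      apply hne
      have : a - b = ((k - 1 : ℕ) : ZMod k) := by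
        rw [← hcastval (a - b)]; congr 1; omega
      have hk1 : ((k - 1 : ℕ) : ZMod k) = -1 := by
        rw [Nat.cast_sub (by omega : 1 ≤ k), ZMod.natCast_self, Nat.cast_one]; ring
      rw [hk1] at this
      have : b = a + 1 := by linear_combination -this
      exact this
  refine hmin m hmpos hmk ⟨fun i => g (b + (i.val : ZMod k)), fun i => ?_⟩
  have hiv : i.val < m := ZMod.val_lt i
  have hsucc : (i + 1).val = (i.val + 1) % m := by
    rw [ZMod.val_add, ← Nat.cast_one (R := ZMod m), ZMod.val_natCast]
    conv_rhs => rw [Nat.add_mod]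
    rw [Nat.add_mod i.val (1 % m), Nat.mod_mod_of_dvd _ dvd_rfl]
  by_cases hcase : i.val + 1 < m
  · have h2 : (i + 1).val = i.val + 1 := by rw [hsucc]; exact Nat.mod_eq_of_lt hcase
    have := hg (b + (i.val : ZMod k))
    simpa [h2, Nat.cast_add, Nat.cast_one, add_assoc] using this
  · have h1 : i.val + 1 = m := by omega
    have h2 : (i + 1).val = 0 := by rw [hsucc, h1, Nat.mod_self]
    have e1 : b + ((i.val : ℕ) : ZMod k) = a := by
      have : (i.val : ℕ) = (a - b).val := by omega
      rw [this, hcastval]; ring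
    simp only [h2, Nat.cast_zero, add_zero, e1]
    exact hab

/-- if `D` contains a directed cycle then `1` is a complementarity
eigenvalue of `D`. -/
theorem stmt9 {V : Type*} [Fintype V] (E : V → V → Prop)
    (h : ∃ v, Relation.TransGen E v v) :
    (1 : ℝ) ∈ compSpec (adjMat E) := by
  have hP : ∃ m, 0 < m ∧ ∃ g : ZMod m → V, ∀ i, E (g i) (g (i + 1)) :=
    exists_zmod_walk E h
  obtain ⟨k, hkpos, ⟨g, hg⟩, hmin⟩ :
      ∃ k, 0 < k ∧ (∃ g : ZMod k → V, ∀ i, E (g i) (g (i + 1))) ∧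
        ∀ m, 0 < m → m < k → ¬ ∃ g' : ZMod m → V, ∀ i, E (g' i) (g' (i + 1)) :=
    ⟨Nat.find hP, (Nat.find_spec hP).1, (Nat.find_spec hP).2,
      fun m hm hmk hex => Nat.find_min hP hmk ⟨hm, hex⟩⟩
  have hchord := chord_lemma E k hkpos g hg hmin
  set S : Set V := Set.range g with hS
  set x : V → ℝ := fun v => if v ∈ S then 1 else 0 with hx
  have hxnn : (0 : V → ℝ) ≤ x := by
    intro v; simp only [hx, Pi.zero_apply]; positivity
  have hAx : ∀ v, (adjMat E).mulVec x v
      = ∑ u, (if E v u ∧ u ∈ S then (1 : ℝ) else 0) := by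
    intro v
    simp only [Matrix.mulVec, dotProduct, adjMat, Matrix.of_apply, hx]
    refine Finset.sum_congr rfl fun u _ => ?_
    by_cases h1 : E v u <;> by_cases h2 : u ∈ S <;> simp [h1, h2]
  have hAxS : ∀ j : ZMod k, (adjMat E).mulVec x (g j) = 1 := by
    intro j
    rw [hAx]
    have key : ∀ u : V, (if E (g j) u ∧ u ∈ S then (1 : ℝ) else 0)
        = if u = g (j + 1) then 1 else 0 := by
      intro u
      refine if_congr ⟨?_, ?_⟩ rfl rfl
      · rintro ⟨he, b, rfl⟩
        rw [hchord j b he]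
      · rintro rfl
        exact ⟨hg j, ⟨j + 1, rfl⟩⟩
    rw [Finset.sum_congr rfl fun u _ => key u]
    simp
  have hAxnn : ∀ v, 0 ≤ (adjMat E).mulVec x v := by
    intro v; rw [hAx]
    exact Finset.sum_nonneg fun u _ => by positivity
  have hxval : ∀ v, v ∈ S → x v = 1 := fun v hv => if_pos hv
  have hxval' : ∀ v, v ∉ S → x v = 0 := fun v hv => if_neg hv
  refine ⟨x, ?_, hxnn, ?_, ?_⟩
  · intro h0
    have h1 : x (g 0) = 1 := hxval _ ⟨0, rfl⟩
    rw [h0] at h1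
    simp at h1
  · intro v
    simp only [Pi.zero_apply, Pi.sub_apply, Pi.smul_apply, one_smul]
    by_cases hv : v ∈ S
    · obtain ⟨j, rfl⟩ := hv
      rw [hAxS j, hxval _ ⟨j, rfl⟩]
      norm_num
    · rw [hxval' v hv]
      simpa using hAxnn v
  · simp only [dotProduct, Pi.sub_apply, Pi.smul_apply, one_smul]
    refine Finset.sum_eq_zero fun v _ => ?_
    by_cases hv : v ∈ S
    · obtain ⟨j, rfl⟩ := hv
      rw [hAxS j, hxval _ ⟨j, rfl⟩]
      ring
    · rw [hxval' v hv]
      ring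
end
end

section
/- A finite digraph D has complementarity spectrum {0,1} if and only if D contains a directed cycle and every strongly connected component of D is either a directed cycle or an isolated vertex. -/
open Matrix
open scoped Classical

noncomputable section

section Aux1
variable {V : Type*} [Fintype V]

lemma adj_mulVec (E : V → V → Prop) (x : V → ℝ) (i : V) :
    (adjMat E).mulVec x i = ∑ j ∈ Finset.univ.filter (fun j => E i j), x j := by
  simp [adjMat, Matrix.mulVec, dotProduct, Finset.sum_filter, ite_mul]

lemma adj_mulVec_nonneg (E : V → V → Prop) {x : V → ℝ} (hx : ∀ i, 0 ≤ x i) (i : V) :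
    0 ≤ (adjMat E).mulVec x i := by
  rw [adj_mulVec]
  exact Finset.sum_nonneg fun j _ => hx j

lemma mem_compSpec_iff {A : Matrix V V ℝ} {lam : ℝ} :
    lam ∈ compSpec A ↔ ∃ x : V → ℝ, x ≠ 0 ∧ (∀ i, 0 ≤ x i) ∧
      (∀ i, lam * x i ≤ A.mulVec x i) ∧ (∀ i, x i ≠ 0 → A.mulVec x i = lam * x i) := by
  constructor
  · rintro ⟨x, hx0, hxnn, hd, hc⟩
    have hxnn' : ∀ i, 0 ≤ x i := fun i => hxnn i
    have hd' : ∀ i, lam * x i ≤ A.mulVec x i := by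
      intro i
      have := hd i
      simp only [Pi.zero_apply, Pi.sub_apply, Pi.smul_apply, smul_eq_mul] at this
      linarith
    refine ⟨x, hx0, hxnn', hd', ?_⟩
    have hterm : ∀ i ∈ Finset.univ, (0:ℝ) ≤ x i * (A.mulVec x - lam • x) i := by
      intro i _
      have := hd i
      simp only [Pi.zero_apply] at this
      exact mul_nonneg (hxnn' i) this
    rw [dotProduct] at hc
    have := (Finset.sum_eq_zero_iff_of_nonneg hterm).mp hc
    intro i hxi
    have hi := this i (Finset.mem_univ i)
    simp only [Pi.sub_apply, Pi.smul_apply, smul_eq_mul] at hi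
    rcases mul_eq_zero.mp hi with h | h
    · exact absurd h hxi
    · linarith
  · rintro ⟨x, hx0, hxnn, hd, heq⟩
    refine ⟨x, hx0, fun i => hxnn i, fun i => ?_, ?_⟩
    · simp only [Pi.zero_apply, Pi.sub_apply, Pi.smul_apply, smul_eq_mul]
      linarith [hd i]
    · rw [dotProduct]
      apply Finset.sum_eq_zero
      intro i _
      by_cases h : x i = 0
      · simp [h]
      · simp only [Pi.sub_apply, Pi.smul_apply, smul_eq_mul, heq i h, sub_self, mul_zero]

lemma mem_compSpec_of_eq (E : V → V → Prop) (lam : ℝ) (x : V → ℝ)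
    (hx0 : x ≠ 0) (hnn : ∀ i, 0 ≤ x i) (hlam : 0 ≤ lam)
    (heq : ∀ i, x i ≠ 0 → (adjMat E).mulVec x i = lam * x i) :
    lam ∈ compSpec (adjMat E) := by
  rw [mem_compSpec_iff]
  refine ⟨x, hx0, hnn, fun i => ?_, heq⟩
  by_cases h : x i = 0
  · rw [h, mul_zero]; exact adj_mulVec_nonneg E hnn i
  · exact le_of_eq (heq i h).symm

lemma zero_mem_compSpec [Nonempty V] (E : V → V → Prop) (hloop : ∀ v, ¬ E v v) :
    (0:ℝ) ∈ compSpec (adjMat E) := by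
  obtain ⟨v⟩ := ‹Nonempty V›
  apply mem_compSpec_of_eq E 0 (fun j => if j = v then 1 else 0)
  · intro h
    have := congrFun h v
    simp at this
  · intro i; positivity
  · exact le_refl 0
  · intro i hi
    have hiv : i = v := by by_contra h; simp [h] at hi
    subst hiv
    rw [adj_mulVec, zero_mul]
    apply Finset.sum_eq_zero
    intro j hj
    simp only [Finset.mem_filter] at hj
    have : j ≠ i := by rintro rfl; exact hloop j hj.2
    simp [this]

end Aux1

section Aux2
variable {V : Type*} [Fintype V] {E : V → V → Prop}

lemma mem_component_self (E : V → V → Prop) (v : V) : v ∈ component E v :=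
  ⟨Relation.ReflTransGen.refl, Relation.ReflTransGen.refl⟩

lemma cycle_unique_succ {C : Set V} (h : IsCycleDigraph (induceRel E C)) (a : ↥C) :
    ∃ b : ↥C, E a.1 b.1 ∧ ∀ c : ↥C, E a.1 c.1 → c = b := by
  obtain ⟨n, hn, e, he⟩ := h
  refine ⟨e.symm (e a + 1), ?_, ?_⟩
  · apply (he a (e.symm (e a + 1))).mpr
    show _ = _
    rw [Equiv.apply_symm_apply]
  · intro c hc
    have h1 : e c = e a + 1 := (he a c).mp hc
    apply e.injective
    rw [h1, Equiv.apply_symm_apply]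

lemma one_mem_compSpec (E : V → V → Prop) {v : V}
    (hcyc : IsCycleDigraph (induceRel E (component E v))) :
    (1:ℝ) ∈ compSpec (adjMat E) := by
  set C := component E v with hC
  apply mem_compSpec_of_eq E 1 (fun j => if j ∈ C then 1 else 0)
  · intro h
    have h2 := congrFun h v
    rw [if_pos (mem_component_self E v)] at h2
    exact one_ne_zero h2
  · intro i; positivity
  · norm_num
  · intro i hi
    have hiC : i ∈ C := by by_contra h; simp [h] at hi
    obtain ⟨b, hb, hbu⟩ := cycle_unique_succ hcyc ⟨i, hiC⟩
    rw [adj_mulVec]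
    have h1 : ∀ j ∈ Finset.univ.filter (fun j => E i j),
        (if j ∈ C then (1:ℝ) else 0) = if j = b.1 then 1 else 0 := by
      intro j hj
      simp only [Finset.mem_filter] at hj
      by_cases hjC : j ∈ C
      · have hcb : (⟨j, hjC⟩ : ↥C) = b := hbu ⟨j, hjC⟩ hj.2
        have : j = b.1 := congrArg Subtype.val hcb
        simp [hjC, this]
      · have : j ≠ b.1 := by rintro rfl; exact hjC b.2
        simp [hjC, this]
    rw [Finset.sum_congr rfl h1, Finset.sum_ite_eq' _ b.1 (fun _ => (1:ℝ))]
    simp [hb, hiC, b.2]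

lemma exists_max_reach {α : Type*} [Fintype α] (r : α → α → Prop) (a0 : α) :
    ∃ u, Relation.ReflTransGen r a0 u ∧
      ∀ w, Relation.ReflTransGen r u w → Relation.ReflTransGen r w u := by
  classical
  set R : α → Finset α := fun w => Finset.univ.filter (fun b => Relation.ReflTransGen r w b)
    with hR
  obtain ⟨u, hu_mem, hu_min⟩ := Finset.exists_min_image
    (Finset.univ.filter (fun w => Relation.ReflTransGen r a0 w)) (fun w => (R w).card)
    ⟨a0, by simp only [Finset.mem_filter, Finset.mem_univ, true_and]; exact .refl⟩
  simp only [Finset.mem_filter, Finset.mem_univ, true_and] at hu_mem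
  refine ⟨u, hu_mem, ?_⟩
  intro w hw
  have hw_mem : w ∈ Finset.univ.filter (fun w => Relation.ReflTransGen r a0 w) := by
    simp only [Finset.mem_filter, Finset.mem_univ, true_and]
    exact hu_mem.trans hw
  have hsub : R w ⊆ R u := by
    intro b hb
    simp only [hR, Finset.mem_filter, Finset.mem_univ, true_and] at hb ⊢
    exact hw.trans hb
  have hcard := hu_min w hw_mem
  have heq : R w = R u := Finset.eq_of_subset_of_card_le hsub hcard
  have : u ∈ R u := by
    simp only [hR, Finset.mem_filter, Finset.mem_univ, true_and]; exact .refl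
  rw [← heq] at this
  simp only [hR, Finset.mem_filter, Finset.mem_univ, true_and] at this
  exact this

lemma pow_eq_one_imp {lam : ℝ} {n : ℕ} (h0 : 0 < lam) (hn : 0 < n) (h : lam ^ n = 1) :
    lam = 1 := by
  rcases lt_trichotomy lam 1 with h1 | h1 | h1
  · have := pow_lt_one₀ h0.le h1 hn.ne'
    rw [h] at this; exact absurd this (lt_irrefl _)
  · exact h1
  · have := one_lt_pow₀ h1 hn.ne'
    rw [h] at this; exact absurd this (lt_irrefl _)

lemma compSpec_subset_pair (E : V → V → Prop) (hloop : ∀ v, ¬ E v v)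
    (hcomp : ∀ v : V, component E v = {v} ∨ IsCycleDigraph (induceRel E (component E v))) :
    compSpec (adjMat E) ⊆ {0, 1} := by
  intro lam hlam
  rw [mem_compSpec_iff] at hlam
  obtain ⟨x, hx0, hnn, hge, heq⟩ := hlam
  have hxpos : ∀ i, x i ≠ 0 → 0 < x i := fun i h => (hnn i).lt_of_ne (Ne.symm h)
  obtain ⟨i0, hi0⟩ : ∃ i, x i ≠ 0 := by
    by_contra h; push_neg at h; exact hx0 (funext fun i => h i)
  have hlam0 : 0 ≤ lam := by
    by_contra h; push_neg at h
    have h1 : (adjMat E).mulVec x i0 = lam * x i0 := heq i0 hi0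
    have h2 := adj_mulVec_nonneg E hnn i0
    nlinarith [hxpos i0 hi0]
  rcases eq_or_lt_of_le hlam0 with h0 | hpos
  · left; exact h0.symm
  right
  set r : V → V → Prop := fun a b => E a b ∧ x a ≠ 0 ∧ x b ≠ 0 with hr
  have hsucc : ∀ i, x i ≠ 0 → ∃ j, E i j ∧ x j ≠ 0 := by
    intro i hi
    have h1 := heq i hi
    rw [adj_mulVec] at h1
    by_contra hcon; push_neg at hcon
    have hz : ∑ j ∈ Finset.univ.filter (fun j => E i j), x j = 0 := by
      apply Finset.sum_eq_zero
      intro j hj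
      simp only [Finset.mem_filter] at hj
      exact hcon j hj.2
    rw [hz] at h1
    nlinarith [hxpos i hi]
  have hmem : ∀ {a b : V}, Relation.ReflTransGen r a b → x a ≠ 0 → x b ≠ 0 := by
    intro a b h ha
    induction h with
    | refl => exact ha
    | tail _ hbc _ => exact hbc.2.2
  obtain ⟨u, hu_reach, hu_max⟩ := exists_max_reach r i0
  have hu : x u ≠ 0 := hmem hu_reach hi0
  rcases hcomp u with hsing | hcyc
  · exfalso
    obtain ⟨j, hj, hjx⟩ := hsucc u hu
    have hjr : Relation.ReflTransGen r u j := Relation.ReflTransGen.single ⟨hj, hu, hjx⟩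
    have hju : Relation.ReflTransGen r j u := hu_max j hjr
    have hjcomp : j ∈ component E u :=
      ⟨Relation.ReflTransGen.mono (r := r) (p := E) (fun _ _ h => h.1) _ _ hju, Relation.ReflTransGen.single hj⟩
    rw [hsing, Set.mem_singleton_iff] at hjcomp
    exact hloop u (hjcomp ▸ hj)
  · obtain ⟨n, hn2, e, he⟩ := hcyc
    have huC : u ∈ component E u := mem_component_self E u
    have hTcomp : ∀ {w : V}, Relation.ReflTransGen r u w → w ∈ component E u := by
      intro w hw
      exact ⟨Relation.ReflTransGen.mono (r := r) (p := E) (fun _ _ h => h.1) _ _ (hu_max w hw),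
        Relation.ReflTransGen.mono (r := r) (p := E) (fun _ _ h => h.1) _ _ hw⟩
    have key : ∀ (i : V) (hiC : i ∈ component E u), Relation.ReflTransGen r u i →
        lam * x i = x (e.symm (e ⟨i, hiC⟩ + 1)).1 ∧
        Relation.ReflTransGen r u (e.symm (e ⟨i, hiC⟩ + 1)).1 := by
      intro i hiC hiT
      have hix : x i ≠ 0 := hmem hiT hu
      set b := e.symm (e ⟨i, hiC⟩ + 1) with hbdef
      have hEib : E i b.1 := by
        have : induceRel E (component E u) ⟨i, hiC⟩ b := by
          apply (he ⟨i, hiC⟩ b).mpr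
          show _ = _
          rw [hbdef, Equiv.apply_symm_apply]
        exact this
      have hsum : (adjMat E).mulVec x i = x b.1 := by
        rw [adj_mulVec]
        apply Finset.sum_eq_single_of_mem b.1 (by simp [hEib])
        intro j hj hjb
        simp only [Finset.mem_filter] at hj
        by_contra hxj
        have hjT : Relation.ReflTransGen r u j := hiT.tail ⟨hj.2, hix, hxj⟩
        have hjC : j ∈ component E u := hTcomp hjT
        have hcb : (⟨j, hjC⟩ : ↥(component E u)) = b := by
          have hcyc' : e (⟨j, hjC⟩ : ↥(component E u)) = e ⟨i, hiC⟩ + 1 :=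
            (he _ _).mp (show induceRel E (component E u) ⟨i, hiC⟩ ⟨j, hjC⟩ from hj.2)
          apply e.injective
          rw [hcyc', hbdef, Equiv.apply_symm_apply]
        exact hjb (congrArg Subtype.val hcb)
      have h1 : lam * x i = x b.1 := by rw [← hsum, heq i hix]
      refine ⟨h1, ?_⟩
      have hxb : x b.1 ≠ 0 := by
        intro hb0; rw [hb0] at h1; nlinarith [hxpos i hix]
      exact hiT.tail ⟨hEib, hix, hxb⟩
    set W : ℕ → ↥(component E u) := fun k => e.symm (e ⟨u, huC⟩ + (k : ZMod n)) with hW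
    have hW0 : W 0 = ⟨u, huC⟩ := by
      simp only [hW, Nat.cast_zero, add_zero, Equiv.symm_apply_apply]
    have main : ∀ k : ℕ, Relation.ReflTransGen r u (W k).1 ∧ lam ^ k * x u = x (W k).1 := by
      intro k
      induction k with
      | zero => rw [hW0]; exact ⟨Relation.ReflTransGen.refl, by rw [pow_zero, one_mul]⟩
      | succ k ih =>
        obtain ⟨hT, hx⟩ := ih
        have hWkC : (W k).1 ∈ component E u := (W k).2
        obtain ⟨h1, h2⟩ := key (W k).1 hWkC hT
        have hstep : (⟨(W k).1, hWkC⟩ : ↥(component E u)) = W k := Subtype.ext rfl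
        rw [hstep] at h1 h2
        have hnext : e.symm (e (W k) + 1) = W (k + 1) := by
          simp only [hW, Equiv.apply_symm_apply, Nat.cast_add, Nat.cast_one, add_assoc]
        rw [hnext] at h1 h2
        refine ⟨h2, ?_⟩
        rw [pow_succ, mul_comm (lam ^ k) lam, mul_assoc, hx, h1]
    have hWn : W n = ⟨u, huC⟩ := by
      simp only [hW, ZMod.natCast_self, add_zero, Equiv.symm_apply_apply]
    have hfin := (main n).2
    rw [hWn] at hfin
    have hpow : lam ^ n = 1 := by
      have h1 : lam ^ n * x u = 1 * x u := by rw [one_mul]; exact hfin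
      exact mul_right_cancel₀ hu h1
    have : lam = 1 := pow_eq_one_imp hpos (by omega) hpow
    simp [this]

end Aux2

section Aux3
variable {V : Type*} [Fintype V] {E : V → V → Prop}

lemma transGen_of_iterate {α : Type*} {E : α → α → Prop} (f : ℕ → α)
    (hf : ∀ k, E (f k) (f (k+1))) {a b : ℕ} (hab : a < b) :
    Relation.TransGen E (f a) (f b) := by
  induction hab with
  | refl => exact Relation.TransGen.single (hf a)
  | step h ih => exact ih.tail (hf _)

lemma exists_cycle_of_one_mem (E : V → V → Prop)
    (h1 : (1:ℝ) ∈ compSpec (adjMat E)) : ∃ v, Relation.TransGen E v v := by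
  rw [mem_compSpec_iff] at h1
  obtain ⟨x, hx0, hnn, hge, heq⟩ := h1
  have hxpos : ∀ i, x i ≠ 0 → 0 < x i := fun i h => (hnn i).lt_of_ne (Ne.symm h)
  obtain ⟨i0, hi0⟩ : ∃ i, x i ≠ 0 := by
    by_contra h; push_neg at h; exact hx0 (funext fun i => h i)
  have hsucc : ∀ i : {i // x i ≠ 0}, ∃ j : {i // x i ≠ 0}, E i.1 j.1 := by
    rintro ⟨i, hi⟩
    have h1 := heq i hi
    rw [adj_mulVec] at h1
    by_contra hcon; push_neg at hcon
    have hz : ∑ j ∈ Finset.univ.filter (fun j => E i j), x j = 0 := by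
      apply Finset.sum_eq_zero
      intro j hj
      simp only [Finset.mem_filter] at hj
      by_contra hxj
      exact (hcon ⟨j, hxj⟩) hj.2
    rw [hz] at h1
    nlinarith [hxpos i hi]
  choose g hg using hsucc
  set f : ℕ → {i // x i ≠ 0} := fun k => g^[k] ⟨i0, hi0⟩ with hf
  have hchain : ∀ k, E (f k).1 (f (k+1)).1 := by
    intro k
    have : f (k+1) = g (f k) := Function.iterate_succ_apply' g k _
    rw [this]
    exact hg (f k)
  obtain ⟨a, b, hab, hfab⟩ := Finite.exists_ne_map_eq_of_infinite f
  rcases hab.lt_or_gt with h | h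
  · have h2 : Relation.TransGen E (f a).1 (f b).1 :=
      transGen_of_iterate (fun k => (f k).1) hchain h
    rw [← hfab] at h2
    exact ⟨(f a).1, h2⟩
  · have h2 : Relation.TransGen E (f b).1 (f a).1 :=
      transGen_of_iterate (fun k => (f k).1) hchain h
    rw [hfab] at h2
    exact ⟨(f b).1, h2⟩

lemma reach_in_component {v a b : V} (hb : b ∈ component E v)
    (h : Relation.ReflTransGen E a b) :
    ∀ ha : a ∈ component E v,
      Relation.ReflTransGen (induceRel E (component E v)) ⟨a, ha⟩ ⟨b, hb⟩ := by
  induction h using Relation.ReflTransGen.head_induction_on with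
  | refl => intro _; exact .refl
  | @head a c hac hcb ih =>
    intro ha
    have hcC : c ∈ component E v := ⟨hcb.trans hb.1, Relation.ReflTransGen.tail ha.2 hac⟩
    exact Relation.ReflTransGen.head
      (show induceRel E (component E v) ⟨a, ha⟩ ⟨c, hcC⟩ from hac) (ih hcC)

lemma component_sc (E : V → V → Prop) (v : V) :
    ∀ a b : ↥(component E v), Relation.ReflTransGen (induceRel E (component E v)) a b := by
  rintro ⟨a, ha⟩ ⟨b, hb⟩
  exact reach_in_component hb (Relation.ReflTransGen.trans ha.1 hb.2) ha

lemma isCycle_of_outdeg_one {α : Type*} [Fintype α] (F : α → α → Prop)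
    (hsc : ∀ a b : α, Relation.ReflTransGen F a b) (hcard : 2 ≤ Fintype.card α)
    (s : α → α) (hs : ∀ a b, F a b ↔ b = s a) : IsCycleDigraph F := by
  have hne : Nonempty α := Fintype.card_pos_iff.mp (by omega)
  obtain ⟨a0⟩ := hne
  have horb : ∀ b c : α, ∃ k, s^[k] b = c := by
    intro b c
    have h := hsc b c
    induction h with
    | refl => exact ⟨0, rfl⟩
    | tail hbc hstep ih =>
      obtain ⟨k, hk⟩ := ih
      refine ⟨k + 1, ?_⟩
      rw [Function.iterate_succ_apply', hk, ← (hs _ _).mp hstep]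
  obtain ⟨k0, hk0⟩ := horb (s a0) a0
  have hm : Function.IsPeriodicPt s (k0 + 1) a0 := by
    show s^[k0+1] a0 = a0
    rw [Function.iterate_succ_apply]
    exact hk0
  set p := Function.minimalPeriod s a0 with hp
  have hppos : 0 < p := hm.minimalPeriod_pos (Nat.succ_pos k0)
  haveI : NeZero p := ⟨hppos.ne'⟩
  set h : ZMod p → α := fun k => s^[k.val] a0 with hh
  have hsurj : Function.Surjective h := by
    intro b
    obtain ⟨k, hk⟩ := horb a0 b
    refine ⟨(k : ZMod p), ?_⟩
    rw [hh]
    simp only [ZMod.val_natCast]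
    rw [Function.iterate_mod_minimalPeriod_eq]
    exact hk
  have hinj : Function.Injective h := by
    intro k l hkl
    have h1 : k.val = l.val :=
      Function.iterate_injOn_Iio_minimalPeriod (ZMod.val_lt k) (ZMod.val_lt l) hkl
    exact ZMod.val_injective p h1
  have hbij : Function.Bijective h := ⟨hinj, hsurj⟩
  set eqv := Equiv.ofBijective h hbij with heqv
  have hcardp : Fintype.card α = p := by
    rw [← ZMod.card p]
    exact Fintype.card_congr eqv.symm
  have hp2 : 2 ≤ p := hcardp ▸ hcard
  haveI : Fact (1 < p) := ⟨hp2⟩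
  have hstep : ∀ k : ZMod p, h (k + 1) = s (h k) := by
    intro k
    show s^[(k+1).val] a0 = s (s^[k.val] a0)
    rw [ZMod.val_add, ZMod.val_one, ← Function.iterate_succ_apply' s k.val a0]
    exact Function.iterate_mod_minimalPeriod_eq
  have hiso : ∀ k l : ZMod p, F (h k) (h l) ↔ l = k + 1 := by
    intro k l
    rw [hs]
    constructor
    · intro hl
      apply hinj
      rw [hstep k, hl]
    · rintro rfl
      exact hstep k
  refine ⟨p, hp2, eqv.symm, ?_⟩
  intro a b
  have ha : h (eqv.symm a) = a := eqv.apply_symm_apply a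
  have hb : h (eqv.symm b) = b := eqv.apply_symm_apply b
  show F a b ↔ eqv.symm b = eqv.symm a + 1
  conv_lhs => rw [← ha, ← hb]
  exact hiso (eqv.symm a) (eqv.symm b)

end Aux3

section PF
variable {α : Type*} [Fintype α]

def pfIter (F : α → α → Prop) : (α → ℝ) → (α → ℝ) := fun y => y + (adjMat F).mulVec y

variable (F : α → α → Prop)

lemma pfIter_apply (y : α → ℝ) (i : α) :
    pfIter F y i = y i + (adjMat F).mulVec y i := rfl

lemma pfIter_nonneg {y : α → ℝ} (h : ∀ i, 0 ≤ y i) (i : α) : 0 ≤ pfIter F y i :=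
  add_nonneg (h i) (adj_mulVec_nonneg F h i)

lemma pfIter_iter_nonneg {y : α → ℝ} (h : ∀ i, 0 ≤ y i) (k : ℕ) (i : α) :
    0 ≤ (pfIter F)^[k] y i := by
  induction k generalizing y with
  | zero => exact h i
  | succ k ih =>
    rw [Function.iterate_succ_apply]
    exact ih (pfIter_nonneg F h)

lemma pfIter_pos {y : α → ℝ} (h : ∀ i, 0 ≤ y i) {i : α} (hi : 0 < y i) :
    0 < pfIter F y i :=
  add_pos_of_pos_of_nonneg hi (adj_mulVec_nonneg F h i)

lemma pfIter_absorb {y : α → ℝ} (h : ∀ i, 0 ≤ y i) {i j : α} (hij : F i j)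
    (hj : 0 < y j) : 0 < pfIter F y i := by
  rw [pfIter_apply, adj_mulVec]
  have hpos : 0 < ∑ k ∈ Finset.univ.filter (fun k => F i k), y k := by
    apply Finset.sum_pos' (fun k _ => h k)
    exact ⟨j, by simp [hij], hj⟩
  linarith [h i]

lemma crossing {F : α → α → Prop} {S : Set α} {a b : α}
    (h : Relation.ReflTransGen F a b) :
    a ∉ S → b ∈ S → ∃ c d, c ∉ S ∧ d ∈ S ∧ F c d := by
  induction h using Relation.ReflTransGen.head_induction_on with
  | refl => intro ha hb; exact absurd hb ha
  | @head a c hac hcb ih =>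
    intro ha hb
    by_cases hc : c ∈ S
    · exact ⟨a, c, ha, hc, hac⟩
    · exact ih hc hb

lemma pfIter_iterate_pos (hsc : ∀ a b : α, Relation.ReflTransGen F a b)
    {y : α → ℝ} (hnn : ∀ i, 0 ≤ y i) (hy : y ≠ 0) (i : α) :
    0 < (pfIter F)^[Fintype.card α] y i := by
  have key : ∀ k : ℕ, (∀ j, 0 < (pfIter F)^[k] y j) ∨
      k + 1 ≤ (Finset.univ.filter (fun j => 0 < (pfIter F)^[k] y j)).card := by
    intro k
    induction k with
    | zero =>
      right
      rw [Nat.succ_le_iff, Finset.card_pos]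
      obtain ⟨j, hj⟩ : ∃ j, y j ≠ 0 := by
        by_contra h; push_neg at h; exact hy (funext fun j => h j)
      exact ⟨j, Finset.mem_filter.mpr ⟨Finset.mem_univ _, (hnn j).lt_of_ne (Ne.symm hj)⟩⟩
    | succ k ih =>
      have hznn : ∀ j, 0 ≤ (pfIter F)^[k] y j := fun j => pfIter_iter_nonneg F hnn k j
      have hsucc : (pfIter F)^[k+1] y = pfIter F ((pfIter F)^[k] y) :=
        Function.iterate_succ_apply' _ _ _
      rcases ih with hall | hcard
      · left
        intro j
        rw [hsucc]
        exact pfIter_pos F hznn (hall j)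
      · by_cases huniv : ∀ j, 0 < (pfIter F)^[k] y j
        · left
          intro j
          rw [hsucc]
          exact pfIter_pos F hznn (huniv j)
        · right
          push_neg at huniv
          obtain ⟨a, ha⟩ := huniv
          have h1 : 0 < (Finset.univ.filter (fun j => 0 < (pfIter F)^[k] y j)).card := by omega
          obtain ⟨b, hb⟩ := Finset.card_pos.mp h1
          simp only [Finset.mem_filter, Finset.mem_univ, true_and] at hb
          obtain ⟨c, d, hcS, hdS, hcd⟩ :=
            crossing (S := {j | 0 < (pfIter F)^[k] y j}) (hsc a b)
              (by simpa using not_lt.mpr ha) hb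
          have hsub : Finset.univ.filter (fun j => 0 < (pfIter F)^[k] y j) ⊆
              Finset.univ.filter (fun j => 0 < pfIter F ((pfIter F)^[k] y) j) := by
            intro j hj
            simp only [Finset.mem_filter, Finset.mem_univ, true_and] at hj ⊢
            exact pfIter_pos F hznn hj
          have hcmem : c ∈ Finset.univ.filter
              (fun j => 0 < pfIter F ((pfIter F)^[k] y) j) := by
            simp only [Finset.mem_filter, Finset.mem_univ, true_and]
            exact pfIter_absorb F hznn hcd (by simpa using hdS)
          have hcnot : c ∉ Finset.univ.filter (fun j => 0 < (pfIter F)^[k] y j) := by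
            simp only [Finset.mem_filter, Finset.mem_univ, true_and]
            simpa using hcS
          have hlt : (Finset.univ.filter (fun j => 0 < (pfIter F)^[k] y j)).card <
              (Finset.univ.filter (fun j => 0 < pfIter F ((pfIter F)^[k] y) j)).card :=
            Finset.card_lt_card ((Finset.ssubset_iff_of_subset hsub).mpr ⟨c, hcmem, hcnot⟩)
          rw [hsucc]
          omega
  rcases key (Fintype.card α) with hall | hcard
  · exact hall i
  · exfalso
    have := Finset.card_filter_le Finset.univ
      (fun j => 0 < (pfIter F)^[Fintype.card α] y j)
    rw [Finset.card_univ] at this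
    omega

lemma pfIter_linear (a b : α → ℝ) (c : ℝ) :
    pfIter F (a - c • b) = pfIter F a - c • pfIter F b := by
  unfold pfIter
  rw [Matrix.mulVec_sub, Matrix.mulVec_smul]
  funext i
  simp only [Pi.add_apply, Pi.sub_apply, Pi.smul_apply, smul_eq_mul]
  ring

lemma pfIter_mulVec (y : α → ℝ) :
    pfIter F ((adjMat F).mulVec y) = (adjMat F).mulVec (pfIter F y) := by
  unfold pfIter
  rw [Matrix.mulVec_add]

lemma pfIter_iterate_eigen (x : α → ℝ) (lam : ℝ) (k : ℕ) :
    (pfIter F)^[k] ((adjMat F).mulVec x - lam • x)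
      = (adjMat F).mulVec ((pfIter F)^[k] x) - lam • (pfIter F)^[k] x := by
  induction k with
  | zero => rfl
  | succ k ih =>
    rw [Function.iterate_succ_apply', ih, pfIter_linear, pfIter_mulVec,
      ← Function.iterate_succ_apply' (pfIter F) k x]

lemma pf_bound [Nonempty α] {lam : ℝ} {x : α → ℝ} (hnn : ∀ i, 0 ≤ x i)
    (hsum : ∑ i, x i = 1) (hge : ∀ i, lam * x i ≤ (adjMat F).mulVec x i) :
    lam ≤ Fintype.card α := by
  obtain ⟨i, _, hmax⟩ := Finset.exists_max_image Finset.univ x Finset.univ_nonempty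
  have hipos : 0 < x i := by
    by_contra h
    push_neg at h
    have hall : ∀ j, x j = 0 :=
      fun j => le_antisymm (le_trans (hmax j (Finset.mem_univ j)) h) (hnn j)
    rw [Finset.sum_congr rfl (fun j _ => hall j)] at hsum
    simp at hsum
  have h1 : lam * x i ≤ (Fintype.card α : ℝ) * x i := by
    calc lam * x i ≤ (adjMat F).mulVec x i := hge i
    _ = ∑ j ∈ Finset.univ.filter (fun j => F i j), x j := adj_mulVec F x i
    _ ≤ ∑ j ∈ Finset.univ.filter (fun j => F i j), x i :=
        Finset.sum_le_sum (fun j _ => hmax j (Finset.mem_univ j))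
    _ = ((Finset.univ.filter (fun j => F i j)).card : ℝ) * x i := by
        rw [Finset.sum_const, nsmul_eq_mul]
    _ ≤ (Fintype.card α : ℝ) * x i := by
        apply mul_le_mul_of_nonneg_right _ hipos.le
        have := (Finset.card_filter_le Finset.univ (fun j => F i j)).trans
          Finset.card_univ.le
        exact_mod_cast this
  exact le_of_mul_le_mul_right h1 hipos

lemma pf_improve [Nonempty α] (hsc : ∀ a b : α, Relation.ReflTransGen F a b)
    {lam : ℝ} {x : α → ℝ} (hnn : ∀ i, 0 ≤ x i) (hx0 : x ≠ 0)
    (hge : ∀ i, lam * x i ≤ (adjMat F).mulVec x i)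
    (hstrict : ∃ i, lam * x i < (adjMat F).mulVec x i) :
    ∃ lam', lam < lam' ∧ ∃ y : α → ℝ, (∀ i, 0 < y i) ∧
      ∀ i, lam' * y i ≤ (adjMat F).mulVec y i := by
  set m := Fintype.card α with hm
  set d : α → ℝ := (adjMat F).mulVec x - lam • x with hd
  have hdnn : ∀ i, 0 ≤ d i := by
    intro i
    simp only [hd, Pi.sub_apply, Pi.smul_apply, smul_eq_mul]
    linarith [hge i]
  have hd0 : d ≠ 0 := by
    obtain ⟨i, hi⟩ := hstrict
    intro h
    have h2 := congrFun h i
    simp only [hd, Pi.sub_apply, Pi.smul_apply, smul_eq_mul, Pi.zero_apply] at h2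
    linarith
  have hypos : ∀ i, 0 < (pfIter F)^[m] x i := pfIter_iterate_pos F hsc hnn hx0
  have hdpos : ∀ i, 0 < (pfIter F)^[m] d i := pfIter_iterate_pos F hsc hdnn hd0
  have hdecomp : (pfIter F)^[m] d
      = (adjMat F).mulVec ((pfIter F)^[m] x) - lam • (pfIter F)^[m] x :=
    pfIter_iterate_eigen F x lam m
  obtain ⟨i0, _, hmin⟩ := Finset.exists_min_image Finset.univ
    (fun i => (pfIter F)^[m] d i / (pfIter F)^[m] x i) Finset.univ_nonempty
  set eps := (pfIter F)^[m] d i0 / (pfIter F)^[m] x i0 with heps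
  have hepspos : 0 < eps := div_pos (hdpos i0) (hypos i0)
  refine ⟨lam + eps, by linarith, (pfIter F)^[m] x, hypos, ?_⟩
  intro i
  have h1 : eps ≤ (pfIter F)^[m] d i / (pfIter F)^[m] x i := hmin i (Finset.mem_univ i)
  have h2 : eps * (pfIter F)^[m] x i ≤ (pfIter F)^[m] d i := (le_div_iff₀ (hypos i)).mp h1
  have h3 : (pfIter F)^[m] d i
      = (adjMat F).mulVec ((pfIter F)^[m] x) i - lam * (pfIter F)^[m] x i := by
    rw [hdecomp]
    simp [Pi.sub_apply, Pi.smul_apply, smul_eq_mul]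
  linarith

lemma pf_normalize {lam : ℝ} {y : α → ℝ} [Nonempty α] (hypos : ∀ i, 0 < y i)
    (hge : ∀ i, lam * y i ≤ (adjMat F).mulVec y i) :
    ∃ z : α → ℝ, (∀ i, 0 ≤ z i) ∧ (∑ i, z i) = 1 ∧
      ∀ i, lam * z i ≤ (adjMat F).mulVec z i := by
  have hsumpos : 0 < ∑ i, y i := Finset.sum_pos (fun i _ => hypos i) Finset.univ_nonempty
  set c := (∑ i, y i)⁻¹ with hc
  have hcpos : 0 < c := inv_pos.mpr hsumpos
  refine ⟨c • y, fun i => mul_nonneg hcpos.le (hypos i).le, ?_, ?_⟩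
  · show (∑ i, c * y i) = 1
    rw [← Finset.mul_sum]
    exact inv_mul_cancel₀ hsumpos.ne'
  · intro i
    have hm : (adjMat F).mulVec (c • y) = c • (adjMat F).mulVec y :=
      Matrix.mulVec_smul (adjMat F) c y
    calc lam * (c • y) i = c * (lam * y i) := by
          simp only [Pi.smul_apply, smul_eq_mul]; ring
    _ ≤ c * ((adjMat F).mulVec y i) := mul_le_mul_of_nonneg_left (hge i) hcpos.le
    _ = (adjMat F).mulVec (c • y) i := by rw [hm]; simp

lemma pf_main [Nonempty α]
    (hsc : ∀ a b : α, Relation.ReflTransGen F a b)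
    (hout : ∀ a : α, ∃ b, F a b) {v0 b1 b2 : α} (hb1 : F v0 b1) (hb2 : F v0 b2)
    (hne : b1 ≠ b2) :
    ∃ lam : ℝ, 1 < lam ∧ ∃ y : α → ℝ, y ≠ 0 ∧ (∀ i, 0 ≤ y i) ∧
      ∀ i, (adjMat F).mulVec y i = lam * y i := by
  have hmul_card : ∀ i : α, (adjMat F).mulVec (fun _ => (1:ℝ)) i
      = ((Finset.univ.filter (fun j => F i j)).card : ℝ) := by
    intro i
    rw [adj_mulVec]
    rw [Finset.sum_const, nsmul_eq_mul, mul_one]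
  have hones_ge : ∀ i, (1:ℝ) * (fun _ => (1:ℝ)) i ≤ (adjMat F).mulVec (fun _ => (1:ℝ)) i := by
    intro i
    rw [hmul_card i, one_mul]
    show (1:ℝ) ≤ _
    obtain ⟨b, hb⟩ := hout i
    have h1 : 0 < (Finset.univ.filter (fun j => F i j)).card :=
      Finset.card_pos.mpr ⟨b, by simp [hb]⟩
    exact_mod_cast h1
  have hones_strict : ∃ i, (1:ℝ) * (fun _ => (1:ℝ)) i
      < (adjMat F).mulVec (fun _ => (1:ℝ)) i := by
    refine ⟨v0, ?_⟩
    rw [hmul_card v0, one_mul]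
    show (1:ℝ) < _
    have h1 : 1 < (Finset.univ.filter (fun j => F v0 j)).card := by
      apply Finset.one_lt_card.mpr
      exact ⟨b1, by simp [hb1], b2, by simp [hb2], hne⟩
    exact_mod_cast h1
  obtain ⟨lam1, hlam1, y1, hy1pos, hy1ge⟩ := pf_improve F hsc
    (x := fun _ => (1:ℝ)) (lam := 1) (fun _ => zero_le_one)
    (by intro h; have := congrFun h (Classical.arbitrary α); simp at this)
    hones_ge hones_strict
  obtain ⟨z1, hz1nn, hz1sum, hz1ge⟩ := pf_normalize F hy1pos hy1ge
  set M : ℝ := (Fintype.card α : ℝ) with hM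
  set K : Set (ℝ × (α → ℝ)) := {p | lam1 ≤ p.1 ∧ p.1 ≤ M ∧ (∀ i, 0 ≤ p.2 i) ∧
    (∑ i, p.2 i) = 1 ∧ ∀ i, p.1 * p.2 i ≤ (adjMat F).mulVec p.2 i} with hK
  have hKne : K.Nonempty := by
    refine ⟨(lam1, z1), le_refl _, ?_, hz1nn, hz1sum, hz1ge⟩
    exact pf_bound F hz1nn hz1sum hz1ge
  have hBcont : ∀ i : α, Continuous (fun p : ℝ × (α → ℝ) => (adjMat F).mulVec p.2 i) := by
    intro i
    have hrw : (fun p : ℝ × (α → ℝ) => (adjMat F).mulVec p.2 i)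
        = fun p => ∑ j, adjMat F i j * p.2 j := rfl
    rw [hrw]
    exact continuous_finset_sum _ fun j _ =>
      continuous_const.mul ((continuous_apply j).comp continuous_snd)
  have hK_closed : IsClosed K := by
    have h1 : IsClosed {p : ℝ × (α → ℝ) | lam1 ≤ p.1} :=
      isClosed_le continuous_const continuous_fst
    have h2 : IsClosed {p : ℝ × (α → ℝ) | p.1 ≤ M} :=
      isClosed_le continuous_fst continuous_const
    have h3 : IsClosed {p : ℝ × (α → ℝ) | ∀ i, 0 ≤ p.2 i} := by
      have : {p : ℝ × (α → ℝ) | ∀ i, 0 ≤ p.2 i} = ⋂ i, {p | 0 ≤ p.2 i} := by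
        ext p; simp
      rw [this]
      exact isClosed_iInter fun i =>
        isClosed_le continuous_const ((continuous_apply i).comp continuous_snd)
    have h4 : IsClosed {p : ℝ × (α → ℝ) | (∑ i, p.2 i) = 1} :=
      isClosed_eq (continuous_finset_sum _ fun i _ =>
        (continuous_apply i).comp continuous_snd) continuous_const
    have h5 : IsClosed {p : ℝ × (α → ℝ) | ∀ i, p.1 * p.2 i ≤ (adjMat F).mulVec p.2 i} := by
      have : {p : ℝ × (α → ℝ) | ∀ i, p.1 * p.2 i ≤ (adjMat F).mulVec p.2 i}
          = ⋂ i, {p | p.1 * p.2 i ≤ (adjMat F).mulVec p.2 i} := by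
        ext p; simp
      rw [this]
      exact isClosed_iInter fun i =>
        isClosed_le (continuous_fst.mul ((continuous_apply i).comp continuous_snd)) (hBcont i)
    have : K = ({p : ℝ × (α → ℝ) | lam1 ≤ p.1} ∩ {p | p.1 ≤ M}
        ∩ {p | ∀ i, 0 ≤ p.2 i} ∩ {p | (∑ i, p.2 i) = 1}
        ∩ {p | ∀ i, p.1 * p.2 i ≤ (adjMat F).mulVec p.2 i}) := by
      ext p
      simp only [hK, Set.mem_setOf_eq, Set.mem_inter_iff]
      tauto
    rw [this]
    exact ((((h1.inter h2).inter h3).inter h4).inter h5)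
  have hK_compact : IsCompact K := by
    have hbig : IsCompact ((Set.Icc lam1 M) ×ˢ (Set.univ.pi fun _ : α => Set.Icc (0:ℝ) 1)) :=
      (isCompact_Icc).prod (isCompact_univ_pi fun _ : α => isCompact_Icc)
    apply hbig.of_isClosed_subset hK_closed
    rintro ⟨lam, x⟩ ⟨h1, h2, h3, h4, h5⟩
    refine ⟨⟨h1, h2⟩, ?_⟩
    intro i _
    refine ⟨h3 i, ?_⟩
    rw [← h4]
    exact Finset.single_le_sum (fun j _ => h3 j) (Finset.mem_univ i)
  obtain ⟨p, hpK, hpmax⟩ := hK_compact.exists_isMaxOn hKne continuous_fst.continuousOn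
  have hpK' := hpK
  simp only [hK, Set.mem_setOf_eq] at hpK'
  obtain ⟨hp1, hp2, hp3, hp4, hp5⟩ := hpK'
  refine ⟨p.1, lt_of_lt_of_le hlam1 hp1, p.2, ?_, hp3, ?_⟩
  · intro h
    rw [h] at hp4
    simp at hp4
  · intro i
    by_contra hne2
    have hstrict : ∃ i, p.1 * p.2 i < (adjMat F).mulVec p.2 i :=
      ⟨i, lt_of_le_of_ne (hp5 i) (Ne.symm hne2)⟩
    have hx0 : p.2 ≠ 0 := by
      intro h
      rw [h] at hp4
      simp at hp4
    obtain ⟨lam', hlam', y, hypos, hyge⟩ := pf_improve F hsc hp3 hx0 hp5 hstrict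
    obtain ⟨z, hznn, hzsum, hzge⟩ := pf_normalize F hypos hyge
    have hzK : (lam', z) ∈ K := by
      refine ⟨le_of_lt (lt_of_le_of_lt hp1 hlam'), ?_, hznn, hzsum, hzge⟩
      exact pf_bound F hznn hzsum hzge
    have := hpmax hzK
    simp only [Set.mem_setOf_eq] at this
    exact absurd (lt_of_lt_of_le hlam' this) (lt_irrefl _)

end PF


/-- `Π(D) = {0,1}` iff `D` has a directed cycle and each strongly
connected component of `D` is a directed cycle or an isolated vertex. -/
theorem stmt10 {V : Type*} [Fintype V] [Nonempty V] (E : V → V → Prop)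
    (hloop : ∀ v, ¬ E v v) :
    compSpec (adjMat E) = {0, 1} ↔
      ((∃ v, Relation.TransGen E v v) ∧
        ∀ v : V, component E v = {v} ∨ IsCycleDigraph (induceRel E (component E v))) := by
  constructor
  · intro hspec
    have h1mem : (1:ℝ) ∈ compSpec (adjMat E) := by
      rw [hspec]; exact Set.mem_insert_iff.mpr (Or.inr rfl)
    refine ⟨exists_cycle_of_one_mem E h1mem, ?_⟩
    intro v
    by_contra hcon
    push_neg at hcon
    obtain ⟨hC1, hC2⟩ := hcon
    haveI : Nonempty ↥(component E v) := ⟨⟨v, mem_component_self E v⟩⟩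
    obtain ⟨u, huC, hune⟩ : ∃ u, u ∈ component E v ∧ u ≠ v := by
      by_contra h
      push_neg at h
      exact hC1 (Set.eq_singleton_iff_unique_mem.mpr
        ⟨mem_component_self E v, fun u hu => h u hu⟩)
    haveI : Nontrivial ↥(component E v) :=
      ⟨⟨⟨u, huC⟩, ⟨v, mem_component_self E v⟩, fun h => hune (congrArg Subtype.val h)⟩⟩
    have hcard : 2 ≤ Fintype.card ↥(component E v) := Fintype.one_lt_card
    have hsc := component_sc E v
    have hout : ∀ a : ↥(component E v), ∃ b, induceRel E (component E v) a b := by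
      intro a
      obtain ⟨t, ht⟩ := Fintype.exists_ne_of_one_lt_card Fintype.one_lt_card a
      rcases (hsc a t).cases_head with heq | ⟨c, hc, _⟩
      · exact absurd heq.symm ht
      · exact ⟨c, hc⟩
    by_cases huniq : ∀ a b c : ↥(component E v),
        induceRel E (component E v) a b → induceRel E (component E v) a c → b = c
    · apply hC2
      set s : ↥(component E v) → ↥(component E v) :=
        fun a => Classical.choose (hout a) with hsdef
      have hsspec : ∀ a, induceRel E (component E v) a (s a) :=
        fun a => Classical.choose_spec (hout a)
      apply isCycle_of_outdeg_one _ hsc hcard s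
      intro a b
      constructor
      · intro h; exact huniq a b (s a) h (hsspec a)
      · rintro rfl; exact hsspec a
    · push_neg at huniq
      obtain ⟨a, b, c, hab, hac, hbc⟩ := huniq
      obtain ⟨lam, hlam, y, hy0, hynn, heig⟩ := pf_main _ hsc hout hab hac hbc
      set x : V → ℝ := fun i => if h : i ∈ component E v then y ⟨i, h⟩ else 0 with hx
      have hxC : ∀ (i : V) (h : i ∈ component E v), x i = y ⟨i, h⟩ := fun i h => dif_pos h
      have hxnC : ∀ i : V, i ∉ component E v → x i = 0 := fun i h => dif_neg h
      have hx0 : x ≠ 0 := by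
        obtain ⟨a0, ha0⟩ : ∃ a0, y a0 ≠ 0 := by
          by_contra h; push_neg at h; exact hy0 (funext fun j => h j)
        intro h
        apply ha0
        have h2 := congrFun h a0.1
        rw [hxC a0.1 a0.2] at h2
        simpa [Subtype.coe_eta] using h2
      have hnn : ∀ i, 0 ≤ x i := by
        intro i
        by_cases h : i ∈ component E v
        · rw [hxC i h]; exact hynn _
        · rw [hxnC i h]
      have hmem : lam ∈ compSpec (adjMat E) := by
        apply mem_compSpec_of_eq E lam x hx0 hnn (by linarith)
        intro i hxi
        have hiC : i ∈ component E v := by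
          by_contra h; exact hxi (hxnC i h)
        have hkey : (adjMat E).mulVec x i
            = (adjMat (induceRel E (component E v))).mulVec y ⟨i, hiC⟩ := by
          rw [adj_mulVec, adj_mulVec, Finset.sum_filter, Finset.sum_filter]
          have e1 : (∑ j : V, if E i j then x j else 0)
              = ∑ j ∈ Finset.univ.filter (fun j => j ∈ component E v),
                  (if E i j then x j else 0) := by
            symm
            apply Finset.sum_subset (Finset.filter_subset _ _)
            intro j _ hj
            simp only [Finset.mem_filter, Finset.mem_univ, true_and] at hj
            rw [hxnC j hj, ite_self]
          have e2 : (∑ j ∈ Finset.univ.filter (fun j => j ∈ component E v),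
                  (if E i j then x j else 0))
              = ∑ b : ↥(component E v), (if E i b.1 then x b.1 else 0) :=
            Finset.sum_subtype _ (fun j => by simp) _
          rw [e1, e2]
          apply Finset.sum_congr rfl
          intro b _
          by_cases hEb : E i b.1
          · rw [if_pos hEb, if_pos (show induceRel E (component E v) ⟨i, hiC⟩ b from hEb),
              hxC b.1 b.2, Subtype.coe_eta]
          · rw [if_neg hEb, if_neg (show ¬induceRel E (component E v) ⟨i, hiC⟩ b from hEb)]
        rw [hkey, heig ⟨i, hiC⟩, hxC i hiC]
      rw [hspec] at hmem
      simp only [Set.mem_insert_iff, Set.mem_singleton_iff] at hmem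
      rcases hmem with h | h <;> linarith
  · rintro ⟨⟨v, hv⟩, hcomp⟩
    apply Set.Subset.antisymm
    · exact compSpec_subset_pair E hloop hcomp
    · intro lam hlam
      simp only [Set.mem_insert_iff, Set.mem_singleton_iff] at hlam
      rcases hlam with rfl | rfl
      · exact zero_mem_compSpec E hloop
      · obtain ⟨w, hvw, hwv⟩ := (Relation.TransGen.head'_iff).mp hv
        have hwC : w ∈ component E v := ⟨hwv, Relation.ReflTransGen.single hvw⟩
        rcases hcomp v with hsing | hcyc
        · exfalso
          rw [hsing, Set.mem_singleton_iff] at hwC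
          exact hloop v (hwC ▸ hvw)
        · exact one_mem_compSpec E hcyc
end
end
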